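/- arXiv:2309.06459 — 8 statements merged into one kernel-verified Lean document; each statement's English description precedes it below -/
import Mathlib

section
/- In a matched pair study under Fisher's sharp null hypothesis, let T = Σ_{i=1}^I (Z_{i1} q_{i1} + Z_{i2} q_{i2}) where, for each pair i, (Z_{i1}, Z_{i2}) with Z_{i1} + Z_{i2} = 1 are mutually independent across pairs and P(Z_{i1} = 1) = exp(γ_i* u_{i1}*)/(exp(γ_i* u_{i1}*) + exp(γ_i* u_{i2}*)) for some γ_i* = log Γ_i* ≥ 0 and u_{ij}* ∈ [0,1]. Suppose Γ_i* ≤ Γ_i for all i, where Γ_i ∈ [1,∞]. Let T̄(Γ) = Σ_{i=1}^I T̄_i where T̄_i are independent, with T̄_i equal to max{q_{i1}, q_{i2}} with probability Γ_i/(1+Γ_i) and min{q_{i1}, q_{i2}} with probability 1/(1+Γ_i). Then P(T ≥ c) ≤ P(T̄(Γ) ≥ c) for all real c. -/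
open scoped ENNReal
open MeasureTheory ProbabilityTheory

private lemma key_ineq (p p' A B A' B' : ℝ≥0∞) (hp' : p' ≤ 1) (hpp : p ≤ p')
    (hA : A ≤ A') (hB : B ≤ B') (hBA : B' ≤ A') :
    p * A + (1 - p) * B ≤ p' * A' + (1 - p') * B' := by
  calc p * A + (1 - p) * B ≤ p * A' + (1 - p) * B' :=
        add_le_add (mul_le_mul_right hA p) (mul_le_mul_right hB _)
    _ = p * A' + ((1 - p') + (p' - p)) * B' := by rw [tsub_add_tsub_cancel hp' hpp]
    _ = p * A' + (1 - p') * B' + (p' - p) * B' := by ring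
    _ ≤ p * A' + (1 - p') * B' + (p' - p) * A' :=
        add_le_add_right (mul_le_mul_right hBA _) _
    _ = (p + (p' - p)) * A' + (1 - p') * B' := by ring
    _ = p' * A' + (1 - p') * B' := by rw [add_tsub_cancel_of_le hpp]

private lemma decomp {Ω : Type*} [MeasurableSpace Ω] (μ : Measure Ω) [IsProbabilityMeasure μ]
    {ι : Type*} [DecidableEq ι] (lo hi : ι → ℝ) (X : ι → Ω → ℝ)
    (hXv : ∀ i ω, X i ω = lo i ∨ X i ω = hi i)
    (hXm : ∀ i, Measurable (X i))
    (hXind : iIndepFun X μ)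
    (a : ι) (s : Finset ι) (ha : a ∉ s) (c : ℝ) :
    μ {ω | c ≤ ∑ i ∈ insert a s, X i ω} =
      μ {ω | X a ω = hi a} * μ {ω | c - hi a ≤ ∑ i ∈ s, X i ω}
      + (1 - μ {ω | X a ω = hi a}) * μ {ω | c - lo a ≤ ∑ i ∈ s, X i ω} := by
  have hS : Measurable (fun ω => ∑ i ∈ s, X i ω) := Finset.measurable_sum s (fun i _ => hXm i)
  have hind : IndepFun (∑ j ∈ s, X j) (X a) μ :=
    hXind.indepFun_finsetSum_of_notMem hXm ha
  have hsum : (∑ j ∈ s, X j) = (fun ω => ∑ j ∈ s, X j ω) := by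
    ext ω; exact Finset.sum_apply ω s X
  rw [hsum] at hind
  have hE : {ω | c ≤ ∑ i ∈ insert a s, X i ω}
      = ((fun ω => ∑ i ∈ s, X i ω) ⁻¹' Set.Ici (c - hi a) ∩ X a ⁻¹' {hi a})
        ∪ ((fun ω => ∑ i ∈ s, X i ω) ⁻¹' Set.Ici (c - lo a) ∩ X a ⁻¹' ({hi a}ᶜ)) := by
    ext ω
    simp only [Finset.sum_insert ha, Set.mem_setOf_eq, Set.mem_union, Set.mem_inter_iff,
      Set.mem_preimage, Set.mem_Ici, Set.mem_singleton_iff, Set.mem_compl_iff]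
    by_cases h : X a ω = hi a
    · constructor
      · intro hc; exact Or.inl ⟨by linarith [h], h⟩
      · rintro (⟨h1, _⟩ | ⟨_, h2⟩)
        · linarith [h]
        · exact absurd h h2
    · have hx : X a ω = lo a := (hXv a ω).resolve_right h
      constructor
      · intro hc; exact Or.inr ⟨by linarith [hx], h⟩
      · rintro (⟨h1, h2⟩ | ⟨h1, _⟩)
        · exact absurd h2 h
        · linarith [hx]
  have hdisj : Disjoint
      ((fun ω => ∑ i ∈ s, X i ω) ⁻¹' Set.Ici (c - hi a) ∩ X a ⁻¹' {hi a})
      ((fun ω => ∑ i ∈ s, X i ω) ⁻¹' Set.Ici (c - lo a) ∩ X a ⁻¹' ({hi a}ᶜ)) := by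
    rw [Set.disjoint_left]
    rintro ω ⟨_, h1⟩ ⟨_, h2⟩
    exact h2 h1
  have hm2 : MeasurableSet
      ((fun ω => ∑ i ∈ s, X i ω) ⁻¹' Set.Ici (c - lo a) ∩ X a ⁻¹' ({hi a}ᶜ)) :=
    (hS measurableSet_Ici).inter (hXm a (measurableSet_singleton _).compl)
  rw [hE, measure_union hdisj hm2,
    hind.measure_inter_preimage_eq_mul _ _ measurableSet_Ici (measurableSet_singleton _),
    hind.measure_inter_preimage_eq_mul _ _ measurableSet_Ici (measurableSet_singleton _).compl,
    Set.preimage_compl, prob_compl_eq_one_sub (hXm a (measurableSet_singleton _))]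
  show _ = μ (X a ⁻¹' {hi a}) * μ ((fun ω => ∑ i ∈ s, X i ω) ⁻¹' Set.Ici (c - hi a))
      + (1 - μ (X a ⁻¹' {hi a})) * μ ((fun ω => ∑ i ∈ s, X i ω) ⁻¹' Set.Ici (c - lo a))
  ring

private lemma dom_lemma {Ω Ω' : Type*} [MeasurableSpace Ω] [MeasurableSpace Ω']
    (μ : Measure Ω) (μ' : Measure Ω')
    [IsProbabilityMeasure μ] [IsProbabilityMeasure μ']
    {ι : Type*} (lo hi : ι → ℝ) (X : ι → Ω → ℝ) (Y : ι → Ω' → ℝ)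
    (hlh : ∀ i, lo i ≤ hi i)
    (hXv : ∀ i ω, X i ω = lo i ∨ X i ω = hi i)
    (hYv : ∀ i ω, Y i ω = lo i ∨ Y i ω = hi i)
    (hXm : ∀ i, Measurable (X i)) (hYm : ∀ i, Measurable (Y i))
    (hXind : iIndepFun X μ)
    (hYind : iIndepFun Y μ')
    (hp : ∀ i, μ {ω | X i ω = hi i} ≤ μ' {ω | Y i ω = hi i}) :
    ∀ (s : Finset ι) (c : ℝ),
      μ {ω | c ≤ ∑ i ∈ s, X i ω} ≤ μ' {ω | c ≤ ∑ i ∈ s, Y i ω} := by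
  classical
  intro s
  induction s using Finset.induction with
  | empty =>
    intro c
    by_cases hc : c ≤ 0 <;> simp [hc]
  | @insert a s ha ih =>
    intro c
    rw [decomp μ lo hi X hXv hXm hXind a s ha c,
      decomp μ' lo hi Y hYv hYm hYind a s ha c]
    apply key_ineq
    · exact prob_le_one
    · exact hp a
    · exact ih (c - hi a)
    · exact ih (c - lo a)
    · exact measure_mono (fun ω h => le_trans (by linarith [hlh a] : c - hi a ≤ c - lo a) h)

private lemma bound_aux (Γs : ℝ) (hΓs : 1 ≤ Γs) (a b : ℝ)
    (ha : a ∈ Set.Icc (0:ℝ) 1) (hb : b ∈ Set.Icc (0:ℝ) 1)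
    (Γ : ℝ≥0∞) (hΓle : ENNReal.ofReal Γs ≤ Γ) :
    ENNReal.ofReal (Real.exp (Real.log Γs * a) /
        (Real.exp (Real.log Γs * a) + Real.exp (Real.log Γs * b))) ≤ 1 - (1 + Γ)⁻¹ := by
  set γ := Real.log Γs with hγdef
  have hγ : 0 ≤ γ := Real.log_nonneg hΓs
  have hΓpos : (0:ℝ) < Γs := lt_of_lt_of_le one_pos hΓs
  have hexp : Real.exp γ = Γs := Real.exp_log hΓpos
  have hx : 0 < Real.exp (γ * a) := Real.exp_pos _
  have hy : 0 < Real.exp (γ * b) := Real.exp_pos _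
  have key : Real.exp (γ * a) ≤ Γs * Real.exp (γ * b) := by
    rw [← hexp, ← Real.exp_add]
    apply Real.exp_le_exp.2
    nlinarith [ha.2, hb.1]
  have hreal : Real.exp (γ * a) / (Real.exp (γ * a) + Real.exp (γ * b)) ≤ Γs / (1 + Γs) := by
    rw [div_le_div_iff₀ (by positivity) (by positivity)]
    nlinarith [key, hx, hy]
  calc ENNReal.ofReal (Real.exp (γ * a) / (Real.exp (γ * a) + Real.exp (γ * b)))
      ≤ ENNReal.ofReal (Γs / (1 + Γs)) := ENNReal.ofReal_le_ofReal hreal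
    _ = 1 - (1 + ENNReal.ofReal Γs)⁻¹ := by
        have h1 : (0:ℝ) < 1 + Γs := by linarith
        rw [show Γs / (1 + Γs) = 1 - (1 + Γs)⁻¹ by field_simp; ring,
          ENNReal.ofReal_sub _ (by positivity), ENNReal.ofReal_one,
          ENNReal.ofReal_inv_of_pos h1, ENNReal.ofReal_add zero_le_one hΓpos.le,
          ENNReal.ofReal_one]
    _ ≤ 1 - (1 + Γ)⁻¹ :=
        tsub_le_tsub_left (ENNReal.inv_le_inv' (add_le_add_right hΓle 1)) 1

/-- Rosenbaum-type stochastic bound for the matched-pair test statistic under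
pair-specific bounds `Γ i ∈ [1,∞]` on the hidden biases. -/
theorem stmt7
    {Ω Ω' : Type*} [MeasurableSpace Ω] [MeasurableSpace Ω']
    (μ : Measure Ω) (μ' : Measure Ω')
    [IsProbabilityMeasure μ] [IsProbabilityMeasure μ']
    (I : ℕ) (q : Fin I → Fin 2 → ℝ)
    (Γstar : Fin I → ℝ) (hΓstar : ∀ i, 1 ≤ Γstar i)
    (u : Fin I → Fin 2 → ℝ) (hu : ∀ i j, u i j ∈ Set.Icc (0:ℝ) 1)
    (Γ : Fin I → ℝ≥0∞) (hΓ1 : ∀ i, 1 ≤ Γ i)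
    (hΓle : ∀ i, ENNReal.ofReal (Γstar i) ≤ Γ i)
    -- the true assignment indicators Z_{i1} (with Z_{i2} = 1 - Z_{i1})
    (Z : Fin I → Ω → ℝ)
    (hZ01 : ∀ i ω, Z i ω = 0 ∨ Z i ω = 1)
    (hZmeas : ∀ i, Measurable (Z i))
    (hZind : iIndepFun Z μ)
    (hZp : ∀ i, μ {ω | Z i ω = 1}
      = ENNReal.ofReal (Real.exp (Real.log (Γstar i) * u i 0) /
          (Real.exp (Real.log (Γstar i) * u i 0) + Real.exp (Real.log (Γstar i) * u i 1))))
    -- Bernoulli indicators defining the bounding variable T̄(Γ)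
    (ξ : Fin I → Ω' → Bool)
    (hξmeas : ∀ i, Measurable (ξ i))
    (hξind : iIndepFun ξ μ')
    (hξp : ∀ i, μ' {ω | ξ i ω = true} = 1 - (1 + Γ i)⁻¹) :
    ∀ c : ℝ,
      μ {ω | c ≤ ∑ i, (Z i ω * q i 0 + (1 - Z i ω) * q i 1)}
        ≤ μ' {ω | c ≤ ∑ i, (if ξ i ω then max (q i 0) (q i 1) else min (q i 0) (q i 1))} := by
  intro c
  have hXv : ∀ i ω, Z i ω * q i 0 + (1 - Z i ω) * q i 1 = min (q i 0) (q i 1)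
      ∨ Z i ω * q i 0 + (1 - Z i ω) * q i 1 = max (q i 0) (q i 1) := by
    intro i ω
    rcases hZ01 i ω with h | h
    · rcases le_total (q i 0) (q i 1) with hq | hq
      · exact Or.inr (by rw [h, max_eq_right hq]; ring)
      · exact Or.inl (by rw [h, min_eq_right hq]; ring)
    · rcases le_total (q i 0) (q i 1) with hq | hq
      · exact Or.inl (by rw [h, min_eq_left hq]; ring)
      · exact Or.inr (by rw [h, max_eq_left hq]; ring)
  have hYv : ∀ (i : Fin I) (ω : Ω'),
      (if ξ i ω then max (q i 0) (q i 1) else min (q i 0) (q i 1)) = min (q i 0) (q i 1)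
      ∨ (if ξ i ω then max (q i 0) (q i 1) else min (q i 0) (q i 1)) = max (q i 0) (q i 1) := by
    intro i ω
    by_cases h : ξ i ω
    · exact Or.inr (if_pos h)
    · exact Or.inl (if_neg h)
  have hp : ∀ i, μ {ω | Z i ω * q i 0 + (1 - Z i ω) * q i 1 = max (q i 0) (q i 1)}
      ≤ μ' {ω | (if ξ i ω then max (q i 0) (q i 1) else min (q i 0) (q i 1))
            = max (q i 0) (q i 1)} := by
    intro i
    have hsub : μ' {ω | ξ i ω = true}
        ≤ μ' {ω | (if ξ i ω then max (q i 0) (q i 1) else min (q i 0) (q i 1))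
              = max (q i 0) (q i 1)} := by
      apply measure_mono
      intro ω h
      simp only [Set.mem_setOf_eq] at h ⊢
      rw [if_pos h]
    rcases lt_trichotomy (q i 0) (q i 1) with h | h | h
    · -- q0 < q1 : hi = q1, {X = hi} = {Z = 1}ᶜ
      have hset : {ω | Z i ω * q i 0 + (1 - Z i ω) * q i 1 = max (q i 0) (q i 1)}
          = {ω | Z i ω = 1}ᶜ := by
        ext ω
        simp only [Set.mem_setOf_eq, Set.mem_compl_iff]
        rcases hZ01 i ω with hz | hz
        · apply iff_of_true
          · rw [hz, max_eq_right h.le]; ring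
          · rw [hz]; norm_num
        · apply iff_of_false
          · rw [hz, max_eq_right h.le]; intro hq; exact h.ne (by linarith)
          · rw [hz]; exact not_not_intro rfl
      rw [hset, prob_compl_eq_one_sub
        (show MeasurableSet {ω | Z i ω = 1} from hZmeas i (measurableSet_singleton 1)), hZp i]
      refine le_trans ?_ hsub
      rw [hξp i]
      have hx : (0:ℝ) < Real.exp (Real.log (Γstar i) * u i 0) := Real.exp_pos _
      have hy : (0:ℝ) < Real.exp (Real.log (Γstar i) * u i 1) := Real.exp_pos _
      have hkey : (1:ℝ≥0∞) - ENNReal.ofReal (Real.exp (Real.log (Γstar i) * u i 0) /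
            (Real.exp (Real.log (Γstar i) * u i 0) + Real.exp (Real.log (Γstar i) * u i 1)))
          = ENNReal.ofReal (Real.exp (Real.log (Γstar i) * u i 1) /
            (Real.exp (Real.log (Γstar i) * u i 1) + Real.exp (Real.log (Γstar i) * u i 0))) := by
        rw [← ENNReal.ofReal_one, ← ENNReal.ofReal_sub _ (by positivity)]
        congr 1
        field_simp
        ring
      rw [hkey]
      exact bound_aux (Γstar i) (hΓstar i) (u i 1) (u i 0) (hu i 1) (hu i 0) (Γ i) (hΓle i)
    · -- q0 = q1 : both events are the whole space
      have hXuniv : {ω | Z i ω * q i 0 + (1 - Z i ω) * q i 1 = max (q i 0) (q i 1)}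
          = Set.univ := by
        ext ω
        simp only [Set.mem_setOf_eq, Set.mem_univ, iff_true]
        rw [← h, max_self]; ring
      have hYuniv : {ω | (if ξ i ω then max (q i 0) (q i 1) else min (q i 0) (q i 1))
            = max (q i 0) (q i 1)} = Set.univ := by
        ext ω
        simp only [Set.mem_setOf_eq, Set.mem_univ, iff_true]
        by_cases hξ : ξ i ω
        · rw [if_pos hξ]
        · rw [if_neg hξ, ← h, min_self, max_self]
      rw [hXuniv, hYuniv, measure_univ, measure_univ]
    · -- q1 < q0 : hi = q0, {X = hi} = {Z = 1}
      have hset : {ω | Z i ω * q i 0 + (1 - Z i ω) * q i 1 = max (q i 0) (q i 1)}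
          = {ω | Z i ω = 1} := by
        ext ω
        simp only [Set.mem_setOf_eq]
        rcases hZ01 i ω with hz | hz
        · apply iff_of_false
          · rw [hz, max_eq_left h.le]; intro hq; exact h.ne' (by linarith)
          · rw [hz]; norm_num
        · apply iff_of_true
          · rw [hz, max_eq_left h.le]; ring
          · rw [hz]
      rw [hset, hZp i]
      refine le_trans ?_ hsub
      rw [hξp i]
      exact bound_aux (Γstar i) (hΓstar i) (u i 0) (u i 1) (hu i 0) (hu i 1) (Γ i) (hΓle i)
  exact dom_lemma μ μ'
    (fun i => min (q i 0) (q i 1)) (fun i => max (q i 0) (q i 1))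
    (fun i ω => Z i ω * q i 0 + (1 - Z i ω) * q i 1)
    (fun i ω => if ξ i ω then max (q i 0) (q i 1) else min (q i 0) (q i 1))
    (fun i => min_le_max) hXv hYv
    (fun i => ((hZmeas i).mul_const _).add ((measurable_const.sub (hZmeas i)).mul_const _))
    (fun i => (measurable_of_countable
      (fun b : Bool => if b then max (q i 0) (q i 1) else min (q i 0) (q i 1))).comp (hξmeas i))
    (hZind.comp (fun i t => t * q i 0 + (1 - t) * q i 1)
      (fun i => (measurable_id.mul_const _).add ((measurable_const.sub measurable_id).mul_const _)))
    (hξind.comp (fun i b => if b then max (q i 0) (q i 1) else min (q i 0) (q i 1))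
      (fun i => measurable_of_countable _))
    hp Finset.univ c
end

section
/- In a matched pair study under Fisher's sharp null, for 1 ≤ k ≤ I and Γ_0 ∈ [1,∞], let I_k be the set of indices of the k matched pairs with the smallest values of |q_{i1} - q_{i2}|. Define T̄(Γ_0; k) = Σ_{i ∈ I_k} T̄_i + Σ_{i ∉ I_k} max{q_{i1}, q_{i2}}, where T̄_i are independent, equal to max{q_{i1}, q_{i2}} with probability Γ_0/(1+Γ_0) and min{q_{i1}, q_{i2}} with probability 1/(1+Γ_0). Let T be the test statistic under any treatment assignment mechanism whose k-th smallest hidden bias satisfies Γ*_{(k)} ≤ Γ_0. Then P(T ≥ c) ≤ P(T̄(Γ_0; k) ≥ c) for all real c. -/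
open scoped ENNReal
open MeasureTheory ProbabilityTheory

private lemma core_ineq {a b a' b' r : ℝ≥0∞} (hab : a + b = 1) (hab' : a' + b' = 1)
    {A B : Prop} [Decidable A] [Decidable B] (hBA : B → A)
    (h : a ≤ a' ∨ (A ↔ B)) :
    (if A then a * r else 0) + (if B then b * r else 0)
      ≤ (if A then a' * r else 0) + (if B then b' * r else 0) := by
  rcases h with h | h
  · by_cases hB : B
    · have hA : A := hBA hB
      simp only [if_pos hA, if_pos hB, ← add_mul, hab, hab', le_refl]
    · by_cases hA : A
      · simp only [if_pos hA, if_neg hB, add_zero]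
        exact mul_le_mul_left h r
      · simp [hA, hB]
  · by_cases hA : A
    · have hB : B := h.mp hA
      simp only [if_pos hA, if_pos hB, ← add_mul, hab, hab', le_refl]
    · have hB : ¬ B := fun hb => hA (hBA hb)
      simp [hA, hB]

private lemma sum_pair {n : ℕ} (i₀ : Fin n) (X : (Fin n → Bool) → ℝ≥0∞) :
    ∑ f : Fin n → Bool, X f
      = ∑ f : Fin n → Bool,
          (if f i₀ = true then X f + X (Function.update f i₀ false) else 0) := by
  classical
  have hinv : Function.Involutive
      (fun f : Fin n → Bool => Function.update f i₀ (!(f i₀))) := by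
    intro f; funext j
    by_cases hj : j = i₀ <;> simp [Function.update_apply, hj]
  have h1 : ∀ f : Fin n → Bool,
      X f = (if f i₀ = true then X f else 0) + (if f i₀ = true then 0 else X f) := by
    intro f; by_cases h : f i₀ = true <;> simp [h]
  calc ∑ f : Fin n → Bool, X f
      = ∑ f : Fin n → Bool,
          ((if f i₀ = true then X f else 0) + (if f i₀ = true then 0 else X f)) :=
        Finset.sum_congr rfl fun f _ => h1 f
    _ = (∑ f : Fin n → Bool, (if f i₀ = true then X f else 0))
        + ∑ f : Fin n → Bool, (if f i₀ = true then 0 else X f) := Finset.sum_add_distrib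
    _ = (∑ f : Fin n → Bool, (if f i₀ = true then X f else 0))
        + ∑ f : Fin n → Bool, (if f i₀ = true then X (Function.update f i₀ false) else 0) := by
        congr 1
        rw [← Equiv.sum_comp (Function.Involutive.toPerm _ hinv)
          (fun f => if f i₀ = true then 0 else X f)]
        refine Finset.sum_congr rfl fun f _ => ?_
        have : (Function.Involutive.toPerm _ hinv f) = Function.update f i₀ (!(f i₀)) := rfl
        rw [this]
        by_cases h : f i₀ = true <;> simp [h, Function.update_apply]
    _ = ∑ f : Fin n → Bool,
          (if f i₀ = true then X f + X (Function.update f i₀ false) else 0) := by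
        rw [← Finset.sum_add_distrib]
        refine Finset.sum_congr rfl fun f _ => ?_
        by_cases h : f i₀ = true <;> simp [h]

private lemma mono_step {n : ℕ} (w w' : Fin n → Bool → ℝ≥0∞) (i₀ : Fin n)
    (hs : w i₀ true + w i₀ false = 1) (hs' : w' i₀ true + w' i₀ false = 1)
    (heq : ∀ i, i ≠ i₀ → w i = w' i)
    (E : (Fin n → Bool) → Prop) [DecidablePred E]
    (hc : (w i₀ true ≤ w' i₀ true ∧
            ∀ f, E (Function.update f i₀ false) → E (Function.update f i₀ true))
        ∨ (∀ f, E (Function.update f i₀ false) ↔ E (Function.update f i₀ true))) :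
    ∑ f : Fin n → Bool, (if E f then ∏ i, w i (f i) else 0)
      ≤ ∑ f : Fin n → Bool, (if E f then ∏ i, w' i (f i) else 0) := by
  classical
  rw [sum_pair i₀ (fun f => if E f then ∏ i, w i (f i) else 0),
    sum_pair i₀ (fun f => if E f then ∏ i, w' i (f i) else 0)]
  refine Finset.sum_le_sum fun f _ => ?_
  by_cases hf : f i₀ = true
  · simp only [if_pos hf]
    set f' := Function.update f i₀ false with hf'
    have hP : ∀ (v : Fin n → Bool → ℝ≥0∞),
        (∏ i, v i (f i)) = v i₀ true * ∏ i ∈ Finset.univ.erase i₀, v i (f i) := by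
      intro v
      rw [← Finset.mul_prod_erase Finset.univ (fun i => v i (f i)) (Finset.mem_univ i₀), hf]
    have hP' : ∀ (v : Fin n → Bool → ℝ≥0∞),
        (∏ i, v i (f' i)) = v i₀ false * ∏ i ∈ Finset.univ.erase i₀, v i (f i) := by
      intro v
      rw [← Finset.mul_prod_erase Finset.univ (fun i => v i (f' i)) (Finset.mem_univ i₀)]
      have h1 : f' i₀ = false := by simp [hf']
      rw [h1]
      congr 1
      refine Finset.prod_congr rfl fun j hj => ?_
      have : j ≠ i₀ := (Finset.mem_erase.mp hj).1
      rw [hf', Function.update_of_ne this]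
    have hPP : (∏ i ∈ Finset.univ.erase i₀, w i (f i))
        = ∏ i ∈ Finset.univ.erase i₀, w' i (f i) := by
      refine Finset.prod_congr rfl fun j hj => ?_
      rw [heq j (Finset.mem_erase.mp hj).1]
    rw [hP w, hP' w, hP w', hP' w', hPP]
    set P := ∏ i ∈ Finset.univ.erase i₀, w' i (f i)
    have hupd : Function.update f i₀ true = f := by
      rw [← hf]; exact Function.update_eq_self i₀ f
    have hBA : E f' → E f := by
      intro hh
      rcases hc with ⟨_, hmono⟩ | hiff
      · have := hmono f; rw [hupd] at this; exact this hh
      · have := (hiff f).mp; rw [hupd] at this; exact this hh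
    refine core_ineq hs hs' hBA ?_
    rcases hc with ⟨hle, _⟩ | hiff
    · exact Or.inl hle
    · refine Or.inr ?_
      have := hiff f; rw [hupd] at this
      exact this.symm
  · simp [hf]

private lemma mono_all {n : ℕ} (w w' : Fin n → Bool → ℝ≥0∞)
    (hs : ∀ i, w i true + w i false = 1) (hs' : ∀ i, w' i true + w' i false = 1)
    (E : (Fin n → Bool) → Prop) [DecidablePred E]
    (hc : ∀ i, (w i true ≤ w' i true ∧
            ∀ f, E (Function.update f i false) → E (Function.update f i true))
        ∨ (∀ f, E (Function.update f i false) ↔ E (Function.update f i true))) :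
    ∑ f : Fin n → Bool, (if E f then ∏ i, w i (f i) else 0)
      ≤ ∑ f : Fin n → Bool, (if E f then ∏ i, w' i (f i) else 0) := by
  classical
  have key : ∀ s : Finset (Fin n),
      ∑ f : Fin n → Bool, (if E f then ∏ i, w i (f i) else 0)
        ≤ ∑ f : Fin n → Bool,
            (if E f then ∏ i, (if i ∈ s then w' i else w i) (f i) else 0) := by
    intro s
    induction s using Finset.induction_on with
    | empty => simp
    | @insert a s ha ih =>
      refine le_trans ih ?_
      refine mono_step (fun i => if i ∈ s then w' i else w i)
        (fun i => if i ∈ insert a s then w' i else w i) a ?_ ?_ ?_ E ?_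
      · by_cases h : a ∈ s <;> simp [h, hs, hs']
      · simp [hs']
      · intro i hi
        by_cases h : i ∈ s <;> simp [h, Finset.mem_insert, hi]
      · rcases hc a with ⟨hle, hmono⟩ | hiff
        · refine Or.inl ⟨?_, hmono⟩
          simp only [ha, if_neg, Finset.mem_insert_self, if_pos]
          exact hle
        · exact Or.inr hiff
  have := key Finset.univ
  simpa using this

private lemma expand_meas {Ω : Type*} [MeasurableSpace Ω] (μ : Measure Ω)
    [IsProbabilityMeasure μ] {n : ℕ} (M : Fin n → Ω → Bool)
    (hmeas : ∀ i, Measurable (M i))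
    (hind : iIndepFun M μ)
    (E : (Fin n → Bool) → Prop) [DecidablePred E] :
    μ {ω | E (fun i => M i ω)}
      = ∑ f : Fin n → Bool, (if E f then ∏ i, μ {ω | M i ω = f i} else 0) := by
  classical
  have hcell : ∀ f : Fin n → Bool,
      μ (⋂ i, (M i) ⁻¹' {f i}) = ∏ i, μ ((M i) ⁻¹' {f i}) := by
    intro f
    exact hind.meas_iInter fun i => ⟨{f i}, trivial, rfl⟩
  have hset : {ω | E (fun i => M i ω)}
      = ⋃ f ∈ Finset.univ.filter E, ⋂ i, (M i) ⁻¹' {f i} := by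
    ext ω
    simp only [Set.mem_setOf_eq, Set.mem_iUnion, Finset.mem_filter, Finset.mem_univ,
      true_and, Set.mem_iInter, Set.mem_preimage, Set.mem_singleton_iff]
    constructor
    · intro h; exact ⟨fun i => M i ω, h, fun i => rfl⟩
    · rintro ⟨f, hf, hfe⟩
      have : (fun i => M i ω) = f := funext hfe
      rwa [this]
  rw [hset, measure_biUnion_finset ?_ ?_]
  · rw [Finset.sum_filter]
    refine Finset.sum_congr rfl fun f _ => ?_
    by_cases h : E f
    · rw [if_pos h, if_pos h, hcell f]
      exact Finset.prod_congr rfl fun i _ => rfl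
    · simp [h]
  · intro f hf g hg hfg
    have : ∃ i, f i ≠ g i := by
      by_contra hcon
      push_neg at hcon
      exact hfg (funext hcon)
    obtain ⟨i, hi⟩ := this
    refine Set.disjoint_left.mpr fun ω hωf hωg => ?_
    simp only [Set.mem_iInter, Set.mem_preimage, Set.mem_singleton_iff] at hωf hωg
    exact hi ((hωf i).symm.trans (hωg i))
  · intro f hf
    exact MeasurableSet.iInter fun i => (hmeas i) (measurableSet_singleton (f i))

/-- Stochastic bound for the matched-pair test statistic when only the k-th
smallest hidden bias is bounded by `Γ0`: the worst case assigns infinite bias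
to the `I - k` pairs with the largest `|q_{i1} - q_{i2}|`. -/
theorem stmt8
    {Ω Ω' : Type*} [MeasurableSpace Ω] [MeasurableSpace Ω']
    (μ : Measure Ω) (μ' : Measure Ω')
    [IsProbabilityMeasure μ] [IsProbabilityMeasure μ']
    (I : ℕ) (q : Fin I → Fin 2 → ℝ)
    (k : ℕ) (hk1 : 1 ≤ k) (hkI : k ≤ I)
    (Γ0 : ℝ≥0∞) (hΓ0 : 1 ≤ Γ0)
    (Γstar : Fin I → ℝ) (hΓstar : ∀ i, 1 ≤ Γstar i)
    (u : Fin I → Fin 2 → ℝ) (hu : ∀ i j, u i j ∈ Set.Icc (0:ℝ) 1)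
    -- the k-th smallest hidden bias is bounded by Γ0
    (hquant : ∃ K : Finset (Fin I), K.card = k ∧ ∀ i ∈ K, ENNReal.ofReal (Γstar i) ≤ Γ0)
    -- the true assignment indicators Z_{i1} (with Z_{i2} = 1 - Z_{i1})
    (Z : Fin I → Ω → ℝ)
    (hZ01 : ∀ i ω, Z i ω = 0 ∨ Z i ω = 1)
    (hZmeas : ∀ i, Measurable (Z i))
    (hZind : iIndepFun Z μ)
    (hZp : ∀ i, μ {ω | Z i ω = 1}
      = ENNReal.ofReal (Real.exp (Real.log (Γstar i) * u i 0) /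
          (Real.exp (Real.log (Γstar i) * u i 0) + Real.exp (Real.log (Γstar i) * u i 1))))
    -- the indices of the k pairs with the smallest |q_{i1} - q_{i2}|
    (S : Finset (Fin I)) (hScard : S.card = k)
    (hSsmall : ∀ i ∈ S, ∀ j ∉ S, |q i 0 - q i 1| ≤ |q j 0 - q j 1|)
    -- Bernoulli indicators defining the bounding variable T̄(Γ0; k)
    (ξ : Fin I → Ω' → Bool)
    (hξmeas : ∀ i, Measurable (ξ i))
    (hξind : iIndepFun ξ μ')
    (hξp : ∀ i ∈ S, μ' {ω | ξ i ω = true} = 1 - (1 + Γ0)⁻¹) :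
    ∀ c : ℝ,
      μ {ω | c ≤ ∑ i, (Z i ω * q i 0 + (1 - Z i ω) * q i 1)}
        ≤ μ' {ω | c ≤ (∑ i ∈ S, (if ξ i ω then max (q i 0) (q i 1) else min (q i 0) (q i 1)))
              + ∑ i ∈ Sᶜ, max (q i 0) (q i 1)} := by
  classical
  intro c
  obtain ⟨K, hKcard, hKle⟩ := hquant
  -- basic abbreviations
  set dmn : Fin I → ℝ := fun i => min (q i 0) (q i 1) with hdmn
  set dmx : Fin I → ℝ := fun i => max (q i 0) (q i 1) with hdmx
  set d : Fin I → ℝ := fun i => dmx i - dmn i with hdd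
  have hd0 : ∀ i, 0 ≤ d i := fun i => sub_nonneg.mpr (min_le_max)
  have hdmx_eq : ∀ i, dmx i = dmn i + d i := fun i => by simp [hdd]
  have habs : ∀ i, |q i 0 - q i 1| = d i := fun i => by
    simp only [hdd, hdmx, hdmn]; rw [abs_sub_comm]; exact (max_sub_min_eq_abs (q i 0) (q i 1)).symm
  have hd_mono : ∀ i ∈ S, ∀ j, j ∉ S → d i ≤ d j := fun i hi j hj => by
    rw [← habs i, ← habs j]; exact hSsmall i hi j hj
  -- the exchange permutation g between S \ K and K \ S
  have hcard' : (S \ K).card = (K \ S).card :=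
    Finset.card_sdiff_comm (hScard.trans hKcard.symm)
  let e : ↥(S \ K) ≃ ↥(K \ S) := Finset.equivOfCardEq hcard'
  let g : Fin I → Fin I := fun x =>
    if h : x ∈ S \ K then (e ⟨x, h⟩ : Fin I)
    else if h : x ∈ K \ S then (e.symm ⟨x, h⟩ : Fin I) else x
  have hdisj : ∀ x : Fin I, x ∈ K \ S → x ∉ S \ K := by
    intro x hx; simp only [Finset.mem_sdiff] at hx ⊢; tauto
  have hg1 : ∀ x (h : x ∈ S \ K), g x = (e ⟨x, h⟩ : Fin I) := by
    intro x h; simp only [g, dif_pos h]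
  have hg2 : ∀ x (h : x ∈ K \ S), g x = (e.symm ⟨x, h⟩ : Fin I) := by
    intro x h
    have : x ∉ S \ K := hdisj x h
    simp only [g, dif_neg this, dif_pos h]
  have hg3 : ∀ x, x ∉ S \ K → x ∉ K \ S → g x = x := by
    intro x h1 h2; simp only [g, dif_neg h1, dif_neg h2]
  have hgSK : ∀ x, x ∈ S \ K → g x ∈ K \ S := by
    intro x h; rw [hg1 x h]; exact (e ⟨x, h⟩).2
  have hgKS : ∀ x, x ∈ K \ S → g x ∈ S \ K := by
    intro x h; rw [hg2 x h]; exact (e.symm ⟨x, h⟩).2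
  have hinv : Function.Involutive g := by
    intro x
    by_cases h1 : x ∈ S \ K
    · rw [hg1 x h1]
      have h2 : ((e ⟨x, h1⟩ : ↥(K \ S)) : Fin I) ∈ K \ S := (e ⟨x, h1⟩).2
      rw [hg2 _ h2]; simp
    · by_cases h2 : x ∈ K \ S
      · rw [hg2 x h2]
        have h3 : ((e.symm ⟨x, h2⟩ : ↥(S \ K)) : Fin I) ∈ S \ K := (e.symm ⟨x, h2⟩).2
        rw [hg1 _ h3]; simp
      · rw [hg3 x h1 h2, hg3 x h1 h2]
  have hgfixSK : ∀ x, x ∈ S → x ∈ K → g x = x := by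
    intro x h1 h2
    refine hg3 x ?_ ?_ <;> simp [Finset.mem_sdiff, h1, h2]
  have hgS_memK : ∀ x, x ∈ S → g x ∈ K := by
    intro x hx
    by_cases h1 : x ∈ S \ K
    · exact (Finset.mem_sdiff.mp (hgSK x h1)).1
    · have hxK : x ∈ K := by
        by_contra hxK
        exact h1 (Finset.mem_sdiff.mpr ⟨hx, hxK⟩)
      rw [hgfixSK x hx hxK]; exact hxK
  -- the "picks the max" indicator
  let gb : Fin I → ℝ → Bool := fun i x =>
    if q i 1 ≤ q i 0 then decide (x = 1) else decide (x = 0)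
  let M : Fin I → Ω → Bool := fun i => gb i ∘ Z i
  have hgbmeas : ∀ i, Measurable (gb i) := by
    intro i
    by_cases hq : q i 1 ≤ q i 0
    · have : gb i = fun x : ℝ => decide (x = 1) := by funext x; simp [gb, hq]
      rw [this]
      apply measurable_to_bool
      have : (fun x : ℝ => decide (x = 1)) ⁻¹' {true} = {1} := by
        ext x; simp
      rw [this]; exact measurableSet_singleton 1
    · have : gb i = fun x : ℝ => decide (x = 0) := by funext x; simp [gb, hq]
      rw [this]
      apply measurable_to_bool
      have : (fun x : ℝ => decide (x = 0)) ⁻¹' {true} = {0} := by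
        ext x; simp
      rw [this]; exact measurableSet_singleton 0
  have hMmeas : ∀ i, Measurable (M i) := fun i => (hgbmeas i).comp (hZmeas i)
  have hMind : iIndepFun M μ := hZind.comp gb hgbmeas
  -- the key pointwise identity for the test statistic
  have hterm : ∀ i ω, Z i ω * q i 0 + (1 - Z i ω) * q i 1
      = dmn i + (if M i ω = true then d i else 0) := by
    intro i ω
    have hdmx' : dmx i = max (q i 0) (q i 1) := rfl
    have hdmn' : dmn i = min (q i 0) (q i 1) := rfl
    have hd' : d i = dmx i - dmn i := rfl
    rcases hZ01 i ω with h | h <;> by_cases hq : q i 1 ≤ q i 0 <;>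
        simp only [M, gb, Function.comp_apply, h, hq, if_true, if_false, decide_eq_true_eq] <;>
        simp only [hd', hdmx', hdmn'] <;>
        [rw [min_eq_right hq, max_eq_left hq];
         rw [min_eq_left (le_of_not_ge hq), max_eq_right (le_of_not_ge hq)];
         rw [min_eq_right hq, max_eq_left hq];
         rw [min_eq_left (le_of_not_ge hq), max_eq_right (le_of_not_ge hq)]] <;>
      norm_num
  -- weights
  let w : Fin I → Bool → ℝ≥0∞ := fun i b => μ {ω | M i ω = b}
  let w' : Fin I → Bool → ℝ≥0∞ := fun i b => μ' {ω | ξ i ω = b}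
  have hpre : ∀ i b, {ω | M i ω = b} = (M i) ⁻¹' {b} := fun i b => rfl
  have hwsum : ∀ i, w i true + w i false = 1 := by
    intro i
    have hms : MeasurableSet {ω | M i ω = true} := (hMmeas i) (measurableSet_singleton true)
    have hcompl : {ω | M i ω = false} = {ω | M i ω = true}ᶜ := by
      ext ω; simp
    show μ {ω | M i ω = true} + μ {ω | M i ω = false} = 1
    rw [hcompl, measure_add_measure_compl hms]
    exact measure_univ
  have hw'sum : ∀ i, w' i true + w' i false = 1 := by
    intro i
    have hms : MeasurableSet {ω | ξ i ω = true} := (hξmeas i) (measurableSet_singleton true)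
    have hcompl : {ω | ξ i ω = false} = {ω | ξ i ω = true}ᶜ := by
      ext ω; simp
    show μ' {ω | ξ i ω = true} + μ' {ω | ξ i ω = false} = 1
    rw [hcompl, measure_add_measure_compl hms]
    exact measure_univ
  -- the probability bound for w i true
  have hwle : ∀ i, w i true ≤ ENNReal.ofReal (Γstar i / (1 + Γstar i)) := by
    intro i
    have hΓpos : (0:ℝ) < Γstar i := lt_of_lt_of_le one_pos (hΓstar i)
    set a : ℝ := Real.log (Γstar i) with ha
    have ha0 : 0 ≤ a := Real.log_nonneg (hΓstar i)
    set e0 : ℝ := Real.exp (a * u i 0) with he0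
    set e1 : ℝ := Real.exp (a * u i 1) with he1
    have he0pos : 0 < e0 := Real.exp_pos _
    have he1pos : 0 < e1 := Real.exp_pos _
    have hspos : 0 < e0 + e1 := by linarith
    have hexpa : Real.exp a = Γstar i := Real.exp_log hΓpos
    have hb0 : e0 / (e0 + e1) ≤ Γstar i / (1 + Γstar i) := by
      rw [div_le_div_iff₀ hspos (by linarith)]
      have h1 : e0 ≤ Γstar i * e1 := by
        rw [← hexpa, he0, he1, ← Real.exp_add]
        apply Real.exp_le_exp.mpr
        have hu0 := hu i 0
        have hu1 := hu i 1
        simp only [Set.mem_Icc] at hu0 hu1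
        nlinarith [hu0.1, hu0.2, hu1.1, hu1.2]
      nlinarith [hΓpos, he0pos]
    have hb1 : e1 / (e0 + e1) ≤ Γstar i / (1 + Γstar i) := by
      rw [div_le_div_iff₀ hspos (by linarith)]
      have h1 : e1 ≤ Γstar i * e0 := by
        rw [← hexpa, he0, he1, ← Real.exp_add]
        apply Real.exp_le_exp.mpr
        have hu0 := hu i 0
        have hu1 := hu i 1
        simp only [Set.mem_Icc] at hu0 hu1
        nlinarith [hu0.1, hu0.2, hu1.1, hu1.2]
      nlinarith [hΓpos, he1pos]
    have hZp' : μ {ω | Z i ω = 1} = ENNReal.ofReal (e0 / (e0 + e1)) := hZp i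
    by_cases hq : q i 1 ≤ q i 0
    · have hset : {ω | M i ω = true} = {ω | Z i ω = 1} := by
        ext ω; simp [M, gb, hq]
      show μ {ω | M i ω = true} ≤ _
      rw [hset, hZp']
      exact ENNReal.ofReal_le_ofReal hb0
    · have hset : {ω | M i ω = true} = {ω | Z i ω = 1}ᶜ := by
        ext ω
        simp only [M, gb, Function.comp_apply, hq, if_false, decide_eq_true_eq,
          Set.mem_setOf_eq, Set.mem_compl_iff]
        constructor
        · intro h0 h1; rw [h1] at h0; norm_num at h0
        · intro h1
          rcases hZ01 i ω with h | h
          · exact h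
          · exact absurd h h1
      have hms : MeasurableSet {ω | Z i ω = 1} := by
        have : {ω | Z i ω = 1} = (Z i) ⁻¹' {1} := rfl
        rw [this]; exact (hZmeas i) (measurableSet_singleton 1)
      show μ {ω | M i ω = true} ≤ _
      rw [hset, prob_compl_eq_one_sub hms, hZp']
      have hp0 : (0:ℝ) ≤ e0 / (e0 + e1) := le_of_lt (div_pos he0pos hspos)
      have hp1 : (0:ℝ) ≤ e1 / (e0 + e1) := le_of_lt (div_pos he1pos hspos)
      have hadd : e0 / (e0 + e1) + e1 / (e0 + e1) = 1 := by
        field_simp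
      have : (1:ℝ≥0∞) - ENNReal.ofReal (e0 / (e0 + e1)) = ENNReal.ofReal (e1 / (e0 + e1)) := by
        apply ENNReal.sub_eq_of_eq_add ENNReal.ofReal_ne_top
        rw [← ENNReal.ofReal_add hp1 hp0, ← ENNReal.ofReal_one]
        congr 1
        linarith
      rw [this]
      exact ENNReal.ofReal_le_ofReal hb1
  -- for indices in K this is below the Bernoulli parameter of ξ
  have hπ : ∀ i, i ∈ K → ENNReal.ofReal (Γstar i / (1 + Γstar i)) ≤ 1 - (1 + Γ0)⁻¹ := by
    intro i hi
    have hΓpos : (0:ℝ) < Γstar i := lt_of_lt_of_le one_pos (hΓstar i)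
    have h1Γpos : (0:ℝ) < 1 + Γstar i := by linarith
    have hfrac : Γstar i / (1 + Γstar i) = 1 - (1 + Γstar i)⁻¹ := by
      field_simp
      ring
    have hinvle : (1 + Γstar i)⁻¹ ≤ (1:ℝ) := by
      rw [inv_le_one_iff₀]; right; linarith
    have hofr : ENNReal.ofReal (1 - (1 + Γstar i)⁻¹)
        = 1 - ENNReal.ofReal ((1 + Γstar i)⁻¹) := by
      symm
      apply ENNReal.sub_eq_of_eq_add ENNReal.ofReal_ne_top
      rw [← ENNReal.ofReal_add (by linarith [hinvle]) (by positivity), ← ENNReal.ofReal_one]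
      congr 1
      linarith
    rw [hfrac, hofr]
    have hinv_eq : ENNReal.ofReal ((1 + Γstar i)⁻¹) = (ENNReal.ofReal (1 + Γstar i))⁻¹ :=
      ENNReal.ofReal_inv_of_pos h1Γpos
    have h2 : (1 + Γ0)⁻¹ ≤ ENNReal.ofReal ((1 + Γstar i)⁻¹) := by
      rw [hinv_eq]
      apply ENNReal.inv_le_inv'
      rw [ENNReal.ofReal_add (by norm_num) (le_of_lt hΓpos), ENNReal.ofReal_one]
      exact add_le_add_right (hKle i hi) 1
    exact tsub_le_tsub_left h2 1
  -- the three events on configurations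
  let E0 : (Fin I → Bool) → Prop := fun f =>
    c ≤ ∑ i, (dmn i + if f i = true then d i else 0)
  let E1 : (Fin I → Bool) → Prop := fun f =>
    c ≤ (∑ i ∈ S, (dmn i + if f (g i) = true then d i else 0)) + ∑ i ∈ Sᶜ, dmx i
  let E2 : (Fin I → Bool) → Prop := fun f =>
    c ≤ (∑ i ∈ S, (dmn i + if f i = true then d i else 0)) + ∑ i ∈ Sᶜ, dmx i
  -- pointwise comparison E0 → E1 (the exchange argument)
  have hE01 : ∀ f : Fin I → Bool, E0 f → E1 f := by
    intro f h0
    refine le_trans h0 ?_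
    set A : Fin I → ℝ := fun i => dmn i + if f i = true then d i else 0 with hA
    set B : Fin I → ℝ := fun i => dmn i + if f (g i) = true then d i else 0 with hB
    have hAle : ∀ i, A i ≤ dmx i := by
      intro i
      rw [hA, hdmx_eq i]
      apply add_le_add_right
      by_cases h : f i = true <;> simp [h, hd0 i]
    have hKSsub : K \ S ⊆ Sᶜ := by
      intro x hx
      rw [Finset.mem_compl]
      exact (Finset.mem_sdiff.mp hx).2
    -- decompositions
    rw [← Finset.sum_add_sum_compl S A]
    rw [← Finset.sum_inter_add_sum_sdiff S K A, ← Finset.sum_inter_add_sum_sdiff S K B]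
    rw [← Finset.sum_sdiff hKSsub (f := A), ← Finset.sum_sdiff hKSsub (f := dmx)]
    have hfix : ∑ i ∈ S ∩ K, A i = ∑ i ∈ S ∩ K, B i := by
      refine Finset.sum_congr rfl fun i hi => ?_
      have hmem := Finset.mem_inter.mp hi
      rw [hB, hA]
      simp only
      rw [hgfixSK i hmem.1 hmem.2]
    have houter : ∑ i ∈ Sᶜ \ (K \ S), A i ≤ ∑ i ∈ Sᶜ \ (K \ S), dmx i :=
      Finset.sum_le_sum fun i _ => hAle i
    have hmid : (∑ i ∈ S \ K, A i) + ∑ i ∈ K \ S, A i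
        ≤ (∑ i ∈ S \ K, B i) + ∑ i ∈ K \ S, dmx i := by
      have hre1 : ∑ i ∈ K \ S, A i = ∑ i ∈ S \ K, A (g i) := by
        refine Finset.sum_bij' (fun a _ => g a) (fun a _ => g a) ?_ ?_ ?_ ?_ ?_
        · exact fun a ha => hgKS a ha
        · exact fun a ha => hgSK a ha
        · exact fun a _ => hinv a
        · exact fun a _ => hinv a
        · intro a ha
          rw [hinv a]
      have hre2 : ∑ i ∈ K \ S, dmx i = ∑ i ∈ S \ K, dmx (g i) := by
        refine Finset.sum_bij' (fun a _ => g a) (fun a _ => g a) ?_ ?_ ?_ ?_ ?_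
        · exact fun a ha => hgKS a ha
        · exact fun a ha => hgSK a ha
        · exact fun a _ => hinv a
        · exact fun a _ => hinv a
        · intro a ha
          rw [hinv a]
      rw [hre1, hre2, ← Finset.sum_add_distrib, ← Finset.sum_add_distrib]
      refine Finset.sum_le_sum fun i hi => ?_
      have hiS : i ∈ S := (Finset.mem_sdiff.mp hi).1
      have hgiKS : g i ∈ K \ S := hgSK i hi
      have hgiNS : g i ∉ S := (Finset.mem_sdiff.mp hgiKS).2
      have hdle : d i ≤ d (g i) := hd_mono i hiS (g i) hgiNS
      rw [hA, hB, hdmx_eq (g i)]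
      simp only
      by_cases hgi : f (g i) = true
      · simp only [hgi, if_true]
        by_cases hfi : f i = true <;> simp [hfi] <;> linarith [hd0 i, hd0 (g i)]
      · simp only [hgi, if_false]
        by_cases hfi : f i = true <;> simp [hfi] <;> linarith [hd0 i, hd0 (g i)]
    calc (∑ i ∈ S ∩ K, A i + ∑ i ∈ S \ K, A i)
          + ((∑ i ∈ Sᶜ \ (K \ S), A i) + ∑ i ∈ K \ S, A i)
        = (∑ i ∈ S ∩ K, A i + ((∑ i ∈ S \ K, A i) + ∑ i ∈ K \ S, A i))
          + ∑ i ∈ Sᶜ \ (K \ S), A i := by ring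
      _ ≤ (∑ i ∈ S ∩ K, B i + ((∑ i ∈ S \ K, B i) + ∑ i ∈ K \ S, dmx i))
          + ∑ i ∈ Sᶜ \ (K \ S), dmx i := by
          rw [hfix]
          exact add_le_add (add_le_add_right hmid _) houter
      _ = (∑ i ∈ S ∩ K, B i + ∑ i ∈ S \ K, B i)
          + ((∑ i ∈ Sᶜ \ (K \ S), dmx i) + ∑ i ∈ K \ S, dmx i) := by ring
  -- event identifications
  have hLHS : {ω | c ≤ ∑ i, (Z i ω * q i 0 + (1 - Z i ω) * q i 1)}
      = {ω | E0 (fun i => M i ω)} := by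
    ext ω
    show (c ≤ ∑ i, (Z i ω * q i 0 + (1 - Z i ω) * q i 1))
      ↔ (c ≤ ∑ i, (dmn i + if M i ω = true then d i else 0))
    rw [Finset.sum_congr rfl fun i _ => hterm i ω]
  have hifterm : ∀ i (ω : Ω'), (if ξ i ω then max (q i 0) (q i 1) else min (q i 0) (q i 1))
      = dmn i + (if ξ i ω = true then d i else 0) := by
    intro i ω
    cases hb : ξ i ω
    · simp only [hb, Bool.false_eq_true, if_false, add_zero, hdmn]
    · simp only [hb, if_true]
      exact hdmx_eq i
  have hRHS : {ω | c ≤ (∑ i ∈ S, (if ξ i ω then max (q i 0) (q i 1) else min (q i 0) (q i 1)))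
        + ∑ i ∈ Sᶜ, max (q i 0) (q i 1)}
      = {ω | E2 (fun i => ξ i ω)} := by
    ext ω
    show (c ≤ (∑ i ∈ S, (if ξ i ω then max (q i 0) (q i 1) else min (q i 0) (q i 1)))
        + ∑ i ∈ Sᶜ, max (q i 0) (q i 1))
      ↔ (c ≤ (∑ i ∈ S, (dmn i + if ξ i ω = true then d i else 0)) + ∑ i ∈ Sᶜ, dmx i)
    rw [Finset.sum_congr rfl fun i _ => hifterm i ω]
  -- reindexing by the permutation g
  have hΦ : Function.Involutive (fun h : Fin I → Bool => h ∘ g) :=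
    fun h => funext fun i => congrArg h (hinv i)
  have hreidx : (∑ f : Fin I → Bool, if E1 f then ∏ i, w i (f i) else 0)
      = ∑ f : Fin I → Bool, if E2 f then ∏ i, w (g i) (f i) else 0 := by
    rw [← Equiv.sum_comp (Function.Involutive.toPerm _ hΦ)
      (fun f => if E1 f then ∏ i, w i (f i) else 0)]
    refine Finset.sum_congr rfl fun h _ => ?_
    have hEeq : E1 (h ∘ g) = E2 h := by
      show (c ≤ (∑ i ∈ S, (dmn i + if (h ∘ g) (g i) = true then d i else 0)) + ∑ i ∈ Sᶜ, dmx i)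
        = (c ≤ (∑ i ∈ S, (dmn i + if h i = true then d i else 0)) + ∑ i ∈ Sᶜ, dmx i)
      congr 2
      refine Finset.sum_congr rfl fun i _ => ?_
      rw [Function.comp_apply, hinv i]
    have hPeq : (∏ i, w i ((h ∘ g) i)) = ∏ i, w (g i) (h i) := by
      rw [← Equiv.prod_comp (Function.Involutive.toPerm _ hinv) (fun j => w (g j) (h j))]
      refine Finset.prod_congr rfl fun i _ => ?_
      show w i (h (g i)) = w (g (g i)) (h (g i))
      rw [hinv i]
    show (if E1 (h ∘ g) then ∏ i, w i ((h ∘ g) i) else 0)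
      = (if E2 h then ∏ i, w (g i) (h i) else 0)
    rw [hPeq]
    exact if_congr (iff_of_eq hEeq) rfl rfl
  -- raising weights to the Bernoulli parameter
  have hstep3 : (∑ f : Fin I → Bool, if E2 f then ∏ i, w (g i) (f i) else 0)
      ≤ ∑ f : Fin I → Bool, if E2 f then ∏ i, w' i (f i) else 0 := by
    refine mono_all (fun i => w (g i)) w' (fun i => hwsum (g i)) hw'sum E2 ?_
    intro i
    by_cases hiS : i ∈ S
    · left
      constructor
      · have h1 : w (g i) true ≤ ENNReal.ofReal (Γstar (g i) / (1 + Γstar (g i))) := hwle (g i)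
        have h2 := hπ (g i) (hgS_memK i hiS)
        have h3 : w' i true = 1 - (1 + Γ0)⁻¹ := hξp i hiS
        rw [h3]
        exact le_trans h1 h2
      · intro f hf
        refine le_trans hf ?_
        apply add_le_add_left
        refine Finset.sum_le_sum fun j hj => ?_
        by_cases hji : j = i
        · subst hji
          simp only [Function.update_self]
          simp [hd0 j]
        · rw [Function.update_of_ne hji, Function.update_of_ne hji]
    · right
      intro f
      have hconst : ∀ b, (∑ j ∈ S, (dmn j + if (Function.update f i b) j = true then d j else 0))
          = ∑ j ∈ S, (dmn j + if f j = true then d j else 0) := by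
        intro b
        refine Finset.sum_congr rfl fun j hj => ?_
        have hji : j ≠ i := fun h => hiS (h ▸ hj)
        rw [Function.update_of_ne hji]
      show (c ≤ (∑ j ∈ S, (dmn j + if (Function.update f i false) j = true then d j else 0))
            + ∑ j ∈ Sᶜ, dmx j)
        ↔ (c ≤ (∑ j ∈ S, (dmn j + if (Function.update f i true) j = true then d j else 0))
            + ∑ j ∈ Sᶜ, dmx j)
      rw [hconst false, hconst true]
  -- final chain
  calc μ {ω | c ≤ ∑ i, (Z i ω * q i 0 + (1 - Z i ω) * q i 1)}
      = μ {ω | E0 (fun i => M i ω)} := by rw [hLHS]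
    _ = ∑ f : Fin I → Bool, (if E0 f then ∏ i, w i (f i) else 0) :=
        expand_meas μ M hMmeas hMind E0
    _ ≤ ∑ f : Fin I → Bool, (if E1 f then ∏ i, w i (f i) else 0) := by
        refine Finset.sum_le_sum fun f _ => ?_
        by_cases h0 : E0 f
        · rw [if_pos h0, if_pos (hE01 f h0)]
        · rw [if_neg h0]
          exact zero_le
    _ = ∑ f : Fin I → Bool, (if E2 f then ∏ i, w (g i) (f i) else 0) := hreidx
    _ ≤ ∑ f : Fin I → Bool, (if E2 f then ∏ i, w' i (f i) else 0) := hstep3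
    _ = μ' {ω | E2 (fun i => ξ i ω)} := (expand_meas μ' ξ hξmeas hξind E2).symm
    _ = μ' {ω | c ≤ (∑ i ∈ S, (if ξ i ω then max (q i 0) (q i 1) else min (q i 0) (q i 1)))
          + ∑ i ∈ Sᶜ, max (q i 0) (q i 1)} := by rw [hRHS]
end

section
/- In a matched pair study, assume Fisher's sharp null H_0 holds and the true k-th smallest hidden bias satisfies Γ*_{(k)} ≤ Γ_0. Then the p-value p̄_{Γ_0;k} = Ḡ_{Γ_0;k}(T) satisfies P(p̄_{Γ_0;k} ≤ α) ≤ α for every α ∈ (0,1), where Ḡ_{Γ_0;k}(c) = P(T̄(Γ_0;k) ≥ c). -/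
open scoped ENNReal
open MeasureTheory ProbabilityTheory

set_option maxHeartbeats 1000000

namespace Stmt10Aux


open scoped Classical in
noncomputable def ind (p : Prop) : ℝ≥0∞ := if p then 1 else 0

lemma ind_pos {p : Prop} (h : p) : ind p = 1 := by simp [ind, h]
lemma ind_neg {p : Prop} (h : ¬p) : ind p = 0 := by simp [ind, h]
lemma ind_le_one (p : Prop) : ind p ≤ 1 := by
  by_cases h : p
  · rw [ind_pos h]
  · rw [ind_neg h]; exact zero_le
lemma ind_mono {p q : Prop} (h : p → q) : ind p ≤ ind q := by
  by_cases hp : p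
  · rw [ind_pos hp, ind_pos (h hp)]
  · rw [ind_neg hp]; exact zero_le
lemma ind_congr {p q : Prop} (h : p ↔ q) : ind p = ind q := by
  by_cases hp : p
  · rw [ind_pos hp, ind_pos (h.1 hp)]
  · rw [ind_neg hp, ind_neg (fun hq => hp (h.2 hq))]

variable {ι : Type*} [Fintype ι] [DecidableEq ι]

noncomputable def Ssum (w : ι → Bool → ℝ≥0∞) (v : ι → Bool → ℝ) (c : ℝ) : ℝ≥0∞ :=
  ∑ b : ι → Bool, (∏ i, w i (b i)) * ind (c ≤ ∑ i, v i (b i))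

lemma Ssum_mono_total {w : ι → Bool → ℝ≥0∞} {v v' : ι → Bool → ℝ}
    (h : ∀ b : ι → Bool, (∑ i, v i (b i)) ≤ ∑ i, v' i (b i)) (c : ℝ) :
    Ssum w v c ≤ Ssum w v' c :=
  Finset.sum_le_sum fun b _ => mul_le_mul_right (ind_mono fun hc => hc.trans (h b)) _

lemma Ssum_split (w : ι → Bool → ℝ≥0∞) (v : ι → Bool → ℝ) (c : ℝ) (i0 : ι) :
    Ssum w v c = ∑ r : {j : ι // j ≠ i0} → Bool, (∏ j : {j : ι // j ≠ i0}, w j.1 (r j)) *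
      ∑ β : Bool, w i0 β * ind (c - (∑ j : {j : ι // j ≠ i0}, v j.1 (r j)) ≤ v i0 β) := by
  classical
  have memiff : ∀ x : ι, x ∈ Finset.univ.erase i0 ↔ x ≠ i0 := by
    intro x; simp [Finset.mem_erase]
  have key : ∀ p : Bool × ({j : ι // j ≠ i0} → Bool),
      (∏ i, w i ((Equiv.funSplitAt i0 Bool).symm p i)) *
        ind (c ≤ ∑ i, v i ((Equiv.funSplitAt i0 Bool).symm p i)) =
      (∏ j : {j : ι // j ≠ i0}, w j.1 (p.2 j)) *
        (w i0 p.1 * ind (c - (∑ j : {j : ι // j ≠ i0}, v j.1 (p.2 j)) ≤ v i0 p.1)) := by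
    intro p
    have h0 : (Equiv.funSplitAt i0 Bool).symm p i0 = p.1 := by
      rw [Equiv.funSplitAt_symm_apply, dif_pos rfl]
    have hne : ∀ (x : ι) (hx : x ≠ i0), (Equiv.funSplitAt i0 Bool).symm p x = p.2 ⟨x, hx⟩ := by
      intro x hx
      rw [Equiv.funSplitAt_symm_apply, dif_neg hx]
    have hprod : (∏ i, w i ((Equiv.funSplitAt i0 Bool).symm p i)) =
        w i0 p.1 * ∏ j : {j : ι // j ≠ i0}, w j.1 (p.2 j) := by
      rw [← Finset.mul_prod_erase Finset.univ _ (Finset.mem_univ i0), h0]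
      congr 1
      rw [Finset.prod_subtype (Finset.univ.erase i0) memiff
        (fun x => w x ((Equiv.funSplitAt i0 Bool).symm p x))]
      refine Finset.prod_congr rfl fun j _ => ?_
      rw [hne j.1 j.2, Subtype.coe_eta]
    have hsum : (∑ i, v i ((Equiv.funSplitAt i0 Bool).symm p i)) =
        v i0 p.1 + ∑ j : {j : ι // j ≠ i0}, v j.1 (p.2 j) := by
      rw [← Finset.add_sum_erase Finset.univ _ (Finset.mem_univ i0), h0]
      congr 1
      rw [Finset.sum_subtype (Finset.univ.erase i0) memiff
        (fun x => v x ((Equiv.funSplitAt i0 Bool).symm p x))]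
      refine Finset.sum_congr rfl fun j _ => ?_
      rw [hne j.1 j.2, Subtype.coe_eta]
    have hiff : (c ≤ v i0 p.1 + ∑ j : {j : ι // j ≠ i0}, v j.1 (p.2 j)) ↔
        (c - (∑ j : {j : ι // j ≠ i0}, v j.1 (p.2 j)) ≤ v i0 p.1) := sub_le_iff_le_add.symm
    rw [hprod, hsum, ind_congr hiff]
    ring
  calc Ssum w v c
      = ∑ p : Bool × ({j : ι // j ≠ i0} → Bool),
          (∏ i, w i ((Equiv.funSplitAt i0 Bool).symm p i)) *
            ind (c ≤ ∑ i, v i ((Equiv.funSplitAt i0 Bool).symm p i)) :=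
        (Equiv.sum_comp (Equiv.funSplitAt i0 Bool).symm
          (fun b => (∏ i, w i (b i)) * ind (c ≤ ∑ i, v i (b i)))).symm
    _ = ∑ p : Bool × ({j : ι // j ≠ i0} → Bool),
          (∏ j : {j : ι // j ≠ i0}, w j.1 (p.2 j)) *
            (w i0 p.1 * ind (c - (∑ j : {j : ι // j ≠ i0}, v j.1 (p.2 j)) ≤ v i0 p.1)) :=
        Finset.sum_congr rfl fun p _ => key p
    _ = _ := by
        rw [Fintype.sum_prod_type, Finset.sum_comm]
        refine Finset.sum_congr rfl fun r _ => ?_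
        rw [Finset.mul_sum]

lemma Ssum_single_le {w w' : ι → Bool → ℝ≥0∞} {v v' : ι → Bool → ℝ} {i0 : ι}
    (hw : ∀ i, i ≠ i0 → w i = w' i) (hv : ∀ i, i ≠ i0 → v i = v' i)
    (hdom : ∀ t : ℝ, (∑ β, w i0 β * ind (t ≤ v i0 β)) ≤ ∑ β, w' i0 β * ind (t ≤ v' i0 β))
    (c : ℝ) : Ssum w v c ≤ Ssum w' v' c := by
  rw [Ssum_split w v c i0, Ssum_split w' v' c i0]
  refine Finset.sum_le_sum fun r _ => ?_
  have h1 : (∏ j : {j : ι // j ≠ i0}, w j.1 (r j)) = ∏ j : {j : ι // j ≠ i0}, w' j.1 (r j) :=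
    Finset.prod_congr rfl fun j _ => by rw [hw j.1 j.2]
  have h2 : (∑ j : {j : ι // j ≠ i0}, v j.1 (r j)) = ∑ j : {j : ι // j ≠ i0}, v' j.1 (r j) :=
    Finset.sum_congr rfl fun j _ => by rw [hv j.1 j.2]
  rw [h1, h2]
  exact mul_le_mul_right (hdom _) _

lemma Ssum_master {w w' : ι → Bool → ℝ≥0∞} {v v' : ι → Bool → ℝ}
    (hdom : ∀ i, ∀ t : ℝ, (∑ β, w i β * ind (t ≤ v i β)) ≤ ∑ β, w' i β * ind (t ≤ v' i β))
    (c : ℝ) : Ssum w v c ≤ Ssum w' v' c := by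
  have H : ∀ F : Finset ι, Ssum w v c ≤
      Ssum (fun i => if i ∈ F then w' i else w i) (fun i => if i ∈ F then v' i else v i) c := by
    intro F
    induction F using Finset.induction_on with
    | empty => simp
    | @insert a F haF ih =>
        refine le_trans ih (Ssum_single_le (i0 := a) ?_ ?_ ?_ c)
        · intro i hi
          simp [Finset.mem_insert, hi]
        · intro i hi
          simp [Finset.mem_insert, hi]
        · intro t
          rw [if_neg haF, if_neg haF, if_pos (Finset.mem_insert_self a F),
            if_pos (Finset.mem_insert_self a F)]
          exact hdom a t
  have := H Finset.univ
  simpa using this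

lemma Ssum_comp (w : ι → Bool → ℝ≥0∞) (v : ι → Bool → ℝ) (c : ℝ) (σ : Equiv.Perm ι) :
    Ssum (fun i => w (σ i)) (fun i => v (σ i)) c = Ssum w v c := by
  set e : (ι → Bool) ≃ (ι → Bool) := Equiv.arrowCongr σ (Equiv.refl Bool) with he
  have heb : ∀ (b : ι → Bool) (j : ι), e b j = b (σ.symm j) := by
    intro b j; simp [he, Equiv.arrowCongr]
  calc Ssum (fun i => w (σ i)) (fun i => v (σ i)) c
      = ∑ b : ι → Bool, (∏ i, w i (e b i)) * ind (c ≤ ∑ i, v i (e b i)) := by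
        refine Finset.sum_congr rfl fun b _ => ?_
        have hp : (∏ i, w (σ i) (b i)) = ∏ i, w i (e b i) := by
          rw [← Equiv.prod_comp σ (fun j => w j (e b j))]
          refine Finset.prod_congr rfl fun i _ => by rw [heb, Equiv.symm_apply_apply]
        have hs : (∑ i, v (σ i) (b i)) = ∑ i, v i (e b i) := by
          rw [← Equiv.sum_comp σ (fun j => v j (e b j))]
          refine Finset.sum_congr rfl fun i _ => by rw [heb, Equiv.symm_apply_apply]
        rw [hp, hs]
    _ = Ssum w v c :=
        Equiv.sum_comp e (fun b => (∏ i, w i (b i)) * ind (c ≤ ∑ i, v i (b i)))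


lemma dom_pair {a b g : ℝ≥0∞} {x y t : ℝ} (ha : a ≤ g) (hb : b ≤ g) (hab : a + b ≤ 1)
    (hg : g ≤ 1) :
    a * ind (t ≤ x) + b * ind (t ≤ y) ≤ g * ind (t ≤ max x y) + (1 - g) * ind (t ≤ min x y) := by
  rcases le_or_gt t x with hx | hx <;> rcases le_or_gt t y with hy | hy
  · rw [ind_pos hx, ind_pos hy, ind_pos (le_trans hx (le_max_left x y)),
      ind_pos (le_min hx hy), mul_one, mul_one, mul_one, mul_one,
      add_tsub_cancel_of_le hg]
    exact hab
  · rw [ind_pos hx, ind_neg (not_le.2 hy), ind_pos (le_trans hx (le_max_left x y)),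
      ind_neg (fun h => absurd (le_trans h (min_le_right x y)) (not_le.2 hy)),
      mul_one, mul_zero, mul_one, mul_zero, add_zero, add_zero]
    exact ha
  · rw [ind_neg (not_le.2 hx), ind_pos hy, ind_pos (le_trans hy (le_max_right x y)),
      ind_neg (fun h => absurd (le_trans h (min_le_left x y)) (not_le.2 hx)),
      mul_zero, mul_one, mul_one, mul_zero, zero_add, add_zero]
    exact hb
  · rw [ind_neg (not_le.2 hx), ind_neg (not_le.2 hy), mul_zero, mul_zero, add_zero]
    exact zero_le

lemma dom_const {a b a' b' : ℝ≥0∞} {x y z t : ℝ} (hsum : a + b ≤ a' + b') (hx : x ≤ z)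
    (hy : y ≤ z) :
    a * ind (t ≤ x) + b * ind (t ≤ y) ≤ a' * ind (t ≤ z) + b' * ind (t ≤ z) := by
  calc a * ind (t ≤ x) + b * ind (t ≤ y)
      ≤ a * ind (t ≤ z) + b * ind (t ≤ z) :=
        add_le_add (mul_le_mul_right (ind_mono fun h => h.trans hx) a)
          (mul_le_mul_right (ind_mono fun h => h.trans hy) b)
    _ = (a + b) * ind (t ≤ z) := (add_mul a b _).symm
    _ ≤ (a' + b') * ind (t ≤ z) := mul_le_mul_left hsum _
    _ = a' * ind (t ≤ z) + b' * ind (t ≤ z) := add_mul a' b' _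

lemma swap_chain (w : ι → Bool → ℝ≥0∞) (wq : Bool → ℝ≥0∞) (Mx mn : ι → ℝ) (S : Finset ι)
    (hcmp : ∀ j ∈ S, ∀ i ∉ S, Mx j - mn j ≤ Mx i - mn i) (c : ℝ) :
    ∀ (n : ℕ) (K : Finset ι), K.card = S.card → (K \ S).card = n →
      (∀ x ∈ K ∪ S, w x = wq) →
      Ssum w (fun i b => if i ∈ K then (if b then Mx i else mn i) else Mx i) c ≤
      Ssum w (fun i b => if i ∈ S then (if b then Mx i else mn i) else Mx i) c := by
  intro n
  induction n with
  | zero =>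
      intro K hcard h0 _
      have hKS : K = S := Finset.eq_of_subset_of_card_le
        (Finset.sdiff_eq_empty_iff_subset.1 (Finset.card_eq_zero.1 h0)) (le_of_eq hcard.symm)
      subst hKS
      exact le_refl _
  | succ n ih =>
      intro K hcard hKn hw
      obtain ⟨i, hi⟩ := Finset.card_pos.1 (by rw [hKn]; exact n.succ_pos)
      have hiK : i ∈ K := (Finset.mem_sdiff.1 hi).1
      have hiS : i ∉ S := (Finset.mem_sdiff.1 hi).2
      have hSK : (S \ K).card = n + 1 := by rw [Finset.card_sdiff_comm hcard.symm, hKn]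
      obtain ⟨j, hj⟩ := Finset.card_pos.1 (by rw [hSK]; exact n.succ_pos)
      have hjS : j ∈ S := (Finset.mem_sdiff.1 hj).1
      have hjK : j ∉ K := (Finset.mem_sdiff.1 hj).2
      have hij : i ≠ j := fun h => hiS (h ▸ hjS)
      set K' := insert j (K.erase i) with hK'
      have hmemK' : ∀ x : ι, x ∈ K' ↔ (x = j ∨ (x ≠ i ∧ x ∈ K)) := by
        intro x; simp [hK', Finset.mem_insert, Finset.mem_erase]
      have hiK' : i ∉ K' := by
        rw [hmemK']
        rintro (h | ⟨h, _⟩)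
        · exact hij h
        · exact h rfl
      have hjK'' : j ∈ K' := Finset.mem_insert_self _ _
      have hcard' : K'.card = S.card := by
        rw [hK', Finset.card_insert_of_notMem (fun h => hjK (Finset.mem_of_mem_erase h)),
          Finset.card_erase_of_mem hiK]
        have hKpos : 0 < K.card := Finset.card_pos.2 ⟨i, hiK⟩
        omega
      have hK'n : (K' \ S).card = n := by
        have hKS' : K' \ S = (K \ S).erase i := by
          ext x
          simp only [Finset.mem_sdiff, Finset.mem_erase, hmemK']
          constructor
          · rintro ⟨h1 | ⟨h2, h3⟩, h4⟩
            · exact absurd (h1 ▸ hjS) h4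
            · exact ⟨h2, h3, h4⟩
          · rintro ⟨h1, h2, h3⟩; exact ⟨Or.inr ⟨h1, h2⟩, h3⟩
        rw [hKS', Finset.card_erase_of_mem hi, hKn]
        omega
      have hw' : ∀ x ∈ K' ∪ S, w x = wq := by
        intro x hx
        apply hw
        rcases Finset.mem_union.1 hx with h | h
        · rcases (hmemK' x).1 h with rfl | ⟨_, h2⟩
          · exact Finset.mem_union_right _ hjS
          · exact Finset.mem_union_left _ h2
        · exact Finset.mem_union_right _ h
      refine le_trans ?_ (ih K' hcard' hK'n hw')
      -- one swap step
      set τ := Equiv.swap i j with hτ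
      have hτi : τ i = j := Equiv.swap_apply_left i j
      have hτj : τ j = i := Equiv.swap_apply_right i j
      have hwτ : (fun x => w (τ x)) = w := by
        funext x
        rcases eq_or_ne x i with rfl | hxi
        · rw [hτi, hw j (Finset.mem_union_right _ hjS), hw x (Finset.mem_union_left _ hiK)]
        · rcases eq_or_ne x j with rfl | hxj
          · rw [hτj, hw i (Finset.mem_union_left _ hiK), hw x (Finset.mem_union_right _ hjS)]
          · rw [Equiv.swap_apply_of_ne_of_ne hxi hxj]
      have e1 : Ssum w (fun x => (fun i b => if i ∈ K then (if b then Mx i else mn i) else Mx i) (τ x)) c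
          = Ssum w (fun i b => if i ∈ K then (if b then Mx i else mn i) else Mx i) c := by
        conv_lhs => rw [← hwτ]
        exact Ssum_comp w (fun i b => if i ∈ K then (if b then Mx i else mn i) else Mx i) c τ
      rw [← e1]
      apply Ssum_mono_total
      intro b
      have hsplit : ∀ f : ι → ℝ,
          (∑ x, f x) = f i + (f j + ∑ x ∈ (Finset.univ.erase i).erase j, f x) := by
        intro f
        rw [← Finset.add_sum_erase Finset.univ f (Finset.mem_univ i),
          ← Finset.add_sum_erase (Finset.univ.erase i) f
            (Finset.mem_erase.2 ⟨hij.symm, Finset.mem_univ j⟩)]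
      rw [hsplit (fun x => (fun i b => if i ∈ K then (if b then Mx i else mn i) else Mx i) (τ x) (b x)),
        hsplit (fun x => (fun i b => if i ∈ K' then (if b then Mx i else mn i) else Mx i) x (b x))]
      simp only []
      have hC : (∑ x ∈ (Finset.univ.erase i).erase j,
            (if τ x ∈ K then (if b x then Mx (τ x) else mn (τ x)) else Mx (τ x)))
          = ∑ x ∈ (Finset.univ.erase i).erase j,
            (if x ∈ K' then (if b x then Mx x else mn x) else Mx x) := by
        refine Finset.sum_congr rfl fun x hx => ?_
        have hxj : x ≠ j := (Finset.mem_erase.1 hx).1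
        have hxi : x ≠ i := (Finset.mem_erase.1 (Finset.mem_erase.1 hx).2).1
        rw [Equiv.swap_apply_of_ne_of_ne hxi hxj]
        have hKK' : x ∈ K ↔ x ∈ K' := by
          rw [hmemK']
          constructor
          · intro h; exact Or.inr ⟨hxi, h⟩
          · rintro (h | ⟨_, h⟩); exact absurd h hxj; exact h
        by_cases hxK : x ∈ K
        · rw [if_pos hxK, if_pos (hKK'.1 hxK)]
        · rw [if_neg hxK, if_neg (fun h => hxK (hKK'.2 h))]
      rw [hτi, hτj, if_neg hjK, if_pos hiK, if_neg hiK', if_pos hjK'', hC]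
      have hd : Mx j - mn j ≤ Mx i - mn i := hcmp j hjS i hiS
      cases hbj : b j
      · simp only [Bool.false_eq_true, if_false]
        linarith
      · simp only [if_true]
        linarith


noncomputable def wB {Ω : Type*} [MeasurableSpace Ω] (μ : Measure Ω) {I : ℕ}
    (f : Fin I → Ω → Bool) : Fin I → Bool → ℝ≥0∞ :=
  fun i b => if b then μ {ω | f i ω = true} else 1 - μ {ω | f i ω = true}

noncomputable def vF {I : ℕ} (q : Fin I → Fin 2 → ℝ) : Fin I → Bool → ℝ :=
  fun i b => if b then q i 0 else q i 1

noncomputable def vS {I : ℕ} (q : Fin I → Fin 2 → ℝ) (S : Finset (Fin I)) :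
    Fin I → Bool → ℝ :=
  fun i b => if i ∈ S then (if b then max (q i 0) (q i 1) else min (q i 0) (q i 1))
    else max (q i 0) (q i 1)

lemma measure_indep {Ω : Type*} [MeasurableSpace Ω] (μ : Measure Ω) [IsProbabilityMeasure μ]
    (f : ι → Ω → Bool) (hm : ∀ i, Measurable (f i))
    (hind : iIndepFun f μ) (P : (ι → Bool) → Prop) :
    μ {ω | P fun i => f i ω}
      = ∑ b : ι → Bool, (∏ i, μ {ω | f i ω = b i}) * ind (P b) := by
  classical
  have hset : {ω | P fun i => f i ω}
      = ⋃ b ∈ Finset.univ.filter P, {ω | ∀ i, f i ω = b i} := by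
    ext ω
    simp only [Set.mem_setOf_eq, Set.mem_iUnion, Finset.mem_filter, Finset.mem_univ, true_and]
    constructor
    · intro h; exact ⟨fun i => f i ω, h, fun i => rfl⟩
    · rintro ⟨b, hP, hb⟩
      have : (fun i => f i ω) = b := funext hb
      rwa [this]
  have hmeas : ∀ b : ι → Bool, MeasurableSet {ω | ∀ i, f i ω = b i} := by
    intro b
    have : {ω | ∀ i, f i ω = b i} = ⋂ i, (f i) ⁻¹' {b i} := by
      ext ω; simp [Set.mem_iInter]
    rw [this]
    exact MeasurableSet.iInter fun i => (hm i) (measurableSet_singleton _)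
  rw [hset, measure_biUnion_finset ?_ (fun b _ => hmeas b)]
  · rw [Finset.sum_filter]
    refine Finset.sum_congr rfl fun b _ => ?_
    have hprod : μ {ω | ∀ i, f i ω = b i} = ∏ i, μ {ω | f i ω = b i} := by
      have hs : {ω | ∀ i, f i ω = b i} = ⋂ i ∈ (Finset.univ : Finset ι), (f i) ⁻¹' {b i} := by
        ext ω; simp [Set.mem_iInter]
      rw [hs, hind.measure_inter_preimage_eq_mul Finset.univ
        (fun i _ => measurableSet_singleton (b i))]
      rfl
    by_cases hP : P b
    · rw [if_pos hP, ind_pos hP, mul_one, hprod]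
    · rw [if_neg hP, ind_neg hP, mul_zero]
  · intro b1 hb1 b2 hb2 hne
    refine Set.disjoint_left.2 fun ω h1 h2 => hne ?_
    exact funext fun i => (h1 i).symm.trans (h2 i)

lemma inner_eq {I : ℕ} {Ω' : Type*} [MeasurableSpace Ω'] (μ' : Measure Ω')
    [IsProbabilityMeasure μ'] (ξ : Fin I → Ω' → Bool) (hm : ∀ i, Measurable (ξ i))
    (hind : iIndepFun ξ μ') (v : Fin I → Bool → ℝ) (t : ℝ) :
    μ' {ω' | t ≤ ∑ i, v i (ξ i ω')} = Ssum (wB μ' ξ) v t := by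
  have h := measure_indep μ' ξ hm hind (fun b => t ≤ ∑ i, v i (b i))
  rw [show {ω' | t ≤ ∑ i, v i (ξ i ω')}
      = {ω' | (fun b => t ≤ ∑ i, v i (b i)) fun i => ξ i ω'} from rfl, h]
  refine Finset.sum_congr rfl fun b _ => ?_
  congr 1
  refine Finset.prod_congr rfl fun i _ => ?_
  cases hb : b i
  · have hc : {ω' | ξ i ω' = false} = {ω' | ξ i ω' = true}ᶜ := by
      ext ω'; simp
    have hms : MeasurableSet {ω' | ξ i ω' = true} := (hm i) (measurableSet_singleton true)
    rw [hc, prob_compl_eq_one_sub hms]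
    simp [wB]
  · simp [wB]

-- the full dominance chain
lemma dominance {I : ℕ} (q : Fin I → Fin 2 → ℝ) (Γ0 : ℝ≥0∞) (pE νt : Fin I → ℝ≥0∞)
    (K S : Finset (Fin I)) (hcard : K.card = S.card)
    (hpE1 : ∀ i, pE i ≤ 1) (hνt1 : ∀ i, νt i ≤ 1)
    (hK : ∀ i ∈ K, (1 + Γ0)⁻¹ ≤ pE i ∧ pE i ≤ 1 - (1 + Γ0)⁻¹)
    (hνS : ∀ i ∈ S, νt i = 1 - (1 + Γ0)⁻¹)
    (hSsmall : ∀ i ∈ S, ∀ j ∉ S, |q i 0 - q i 1| ≤ |q j 0 - q j 1|)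
    (t : ℝ) :
    Ssum (fun i b => if b then pE i else 1 - pE i) (fun i b => if b then q i 0 else q i 1) t
      ≤ Ssum (fun i b => if b then νt i else 1 - νt i)
          (fun i b => if i ∈ S then (if b then max (q i 0) (q i 1) else min (q i 0) (q i 1))
            else max (q i 0) (q i 1)) t := by
  classical
  set Mx : Fin I → ℝ := fun i => max (q i 0) (q i 1) with hMx
  set mn : Fin I → ℝ := fun i => min (q i 0) (q i 1) with hmn
  have hinv1 : (1 + Γ0)⁻¹ ≤ (1 : ℝ≥0∞) := ENNReal.inv_le_one.2 le_self_add
  have hg1 : (1 : ℝ≥0∞) - (1 + Γ0)⁻¹ ≤ 1 := tsub_le_self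
  have hgsum : ((1 : ℝ≥0∞) - (1 + Γ0)⁻¹) + (1 + Γ0)⁻¹ = 1 := tsub_add_cancel_of_le hinv1
  set wg : Bool → ℝ≥0∞ := fun b => if b then 1 - (1 + Γ0)⁻¹ else (1 + Γ0)⁻¹ with hwg
  set wp : Fin I → Bool → ℝ≥0∞ := fun i b => if b then pE i else 1 - pE i with hwp
  set wU : Fin I → Bool → ℝ≥0∞ := fun i => if i ∈ K ∪ S then wg else wp i with hwU
  have hwpsum : ∀ i, wp i true + wp i false = 1 := by
    intro i; simp only [hwp, if_pos, if_neg]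
    exact add_tsub_cancel_of_le (hpE1 i)
  have hwUsum : ∀ i, wU i true + wU i false = 1 := by
    intro i
    by_cases h : i ∈ K ∪ S
    · simp only [hwU, if_pos h, hwg]
      exact hgsum
    · simp only [hwU, if_neg h]
      exact hwpsum i
  have hcmp : ∀ j ∈ S, ∀ i ∉ S, Mx j - mn j ≤ Mx i - mn i := by
    intro j hj i hi
    have habs : ∀ x : Fin I, Mx x - mn x = |q x 0 - q x 1| := fun x => (max_sub_min_eq_abs _ _).trans (abs_sub_comm _ _)
    rw [habs, habs]
    exact hSsmall j hj i hi
  -- step 1 : to (wU, vC K)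
  have step1 : Ssum wp (fun i b => if b then q i 0 else q i 1) t
      ≤ Ssum wU (fun i b => if i ∈ K then (if b then Mx i else mn i) else Mx i) t := by
    apply Ssum_master
    intro i s
    rw [Fintype.sum_bool, Fintype.sum_bool]
    by_cases hiK : i ∈ K
    · have hU : wU i = wg := if_pos (Finset.mem_union_left _ hiK)
      simp only [if_pos hiK, hU]
      have h1 := (hK i hiK).1
      have h2 := (hK i hiK).2
      have hb : 1 - pE i ≤ 1 - (1 + Γ0)⁻¹ := tsub_le_tsub_left h1 1
      have hmain := dom_pair (t := s) (x := q i 0) (y := q i 1) h2 hb (le_of_eq (hwpsum i)) hg1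
      have hrw : (1 : ℝ≥0∞) - (1 - (1 + Γ0)⁻¹) = (1 + Γ0)⁻¹ :=
        ENNReal.sub_sub_cancel ENNReal.one_ne_top hinv1
      rw [hrw] at hmain
      show pE i * ind (s ≤ q i 0) + (1 - pE i) * ind (s ≤ q i 1)
        ≤ (1 - (1 + Γ0)⁻¹) * ind (s ≤ Mx i) + (1 + Γ0)⁻¹ * ind (s ≤ mn i)
      exact hmain
    · simp only [if_neg hiK]
      have hsum : wp i true + wp i false ≤ wU i true + wU i false := by
        rw [hwpsum i, hwUsum i]
      have hmain := dom_const (t := s) (x := q i 0) (y := q i 1) (z := Mx i) hsum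
        (le_max_left _ _) (le_max_right _ _)
      show wp i true * ind (s ≤ q i 0) + wp i false * ind (s ≤ q i 1)
        ≤ wU i true * ind (s ≤ Mx i) + wU i false * ind (s ≤ Mx i)
      exact hmain
  -- step 2 : swap chain
  have step2 : Ssum wU (fun i b => if i ∈ K then (if b then Mx i else mn i) else Mx i) t
      ≤ Ssum wU (fun i b => if i ∈ S then (if b then Mx i else mn i) else Mx i) t := by
    exact swap_chain wU wg Mx mn S hcmp t (K \ S).card K hcard rfl
      (fun x hx => if_pos hx)
  -- step 3 : to the ξ weights
  have step3 : Ssum wU (fun i b => if i ∈ S then (if b then Mx i else mn i) else Mx i) t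
      ≤ Ssum (fun i b => if b then νt i else 1 - νt i)
          (fun i b => if i ∈ S then (if b then Mx i else mn i) else Mx i) t := by
    apply Ssum_master
    intro i s
    rw [Fintype.sum_bool, Fintype.sum_bool]
    by_cases hiS : i ∈ S
    · have hU : wU i = wg := if_pos (Finset.mem_union_right _ hiS)
      have hν : νt i = 1 - (1 + Γ0)⁻¹ := hνS i hiS
      apply le_of_eq
      rw [hU]
      simp only [hwg, if_pos, if_neg, hν,
        ENNReal.sub_sub_cancel ENNReal.one_ne_top hinv1]
    · simp only [if_neg hiS]
      have hsum : wU i true + wU i false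
          ≤ (if (true : Bool) = true then νt i else 1 - νt i)
            + (if (false : Bool) = true then νt i else 1 - νt i) := by
        rw [hwUsum i, if_pos rfl, if_neg Bool.false_ne_true,
          add_tsub_cancel_of_le (hνt1 i)]
      exact dom_const (t := s) hsum le_rfl le_rfl
  exact le_trans step1 (le_trans step2 step3)



lemma prob_bound (Γ0 : ℝ≥0∞) (Γ : ℝ) (hΓ : 1 ≤ Γ) (hΓ0 : ENNReal.ofReal Γ ≤ Γ0)
    (u0 u1 : ℝ) (h00 : 0 ≤ u0) (h01 : u0 ≤ 1) (h10 : 0 ≤ u1) (h11 : u1 ≤ 1) :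
    (1 + Γ0)⁻¹ ≤ ENNReal.ofReal (Real.exp (Real.log Γ * u0) /
        (Real.exp (Real.log Γ * u0) + Real.exp (Real.log Γ * u1)))
    ∧ ENNReal.ofReal (Real.exp (Real.log Γ * u0) /
        (Real.exp (Real.log Γ * u0) + Real.exp (Real.log Γ * u1))) ≤ 1 - (1 + Γ0)⁻¹ := by
  have hΓpos : (0:ℝ) < Γ := lt_of_lt_of_le one_pos hΓ
  have hγ : 0 ≤ Real.log Γ := Real.log_nonneg hΓ
  set γ := Real.log Γ with hγdef
  have hApos : 0 < Real.exp (γ * u0) := Real.exp_pos _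
  have hBpos : 0 < Real.exp (γ * u1) := Real.exp_pos _
  have hexp : Real.exp γ = Γ := Real.exp_log hΓpos
  have h1 : Real.exp (γ * u0) ≤ Γ * Real.exp (γ * u1) := by
    calc Real.exp (γ * u0) ≤ Real.exp (γ + γ * u1) := by
          refine Real.exp_le_exp.2 ?_
          nlinarith [mul_nonneg hγ h10, mul_le_of_le_one_right hγ h01]
      _ = Γ * Real.exp (γ * u1) := by rw [Real.exp_add, hexp]
  have h2 : Real.exp (γ * u1) ≤ Γ * Real.exp (γ * u0) := by
    calc Real.exp (γ * u1) ≤ Real.exp (γ + γ * u0) := by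
          refine Real.exp_le_exp.2 ?_
          nlinarith [mul_nonneg hγ h00, mul_le_of_le_one_right hγ h11]
      _ = Γ * Real.exp (γ * u0) := by rw [Real.exp_add, hexp]
  have hp1 : 1 / (1 + Γ) ≤ Real.exp (γ * u0) / (Real.exp (γ * u0) + Real.exp (γ * u1)) := by
    rw [div_le_div_iff₀ (by positivity) (by positivity)]
    nlinarith [h2]
  have hp2 : Real.exp (γ * u0) / (Real.exp (γ * u0) + Real.exp (γ * u1)) ≤ Γ / (1 + Γ) := by
    rw [div_le_div_iff₀ (by positivity) (by positivity)]
    nlinarith [h1]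
  have hofadd : (1 : ℝ≥0∞) + ENNReal.ofReal Γ = ENNReal.ofReal (1 + Γ) := by
    rw [ENNReal.ofReal_add (by norm_num) hΓpos.le, ENNReal.ofReal_one]
  have hkey : (1 + Γ0)⁻¹ ≤ ENNReal.ofReal (1 / (1 + Γ)) := by
    rw [one_div, ENNReal.ofReal_inv_of_pos (by positivity), ← hofadd]
    exact ENNReal.inv_le_inv' (add_le_add le_rfl hΓ0)
  constructor
  · exact le_trans hkey (ENNReal.ofReal_le_ofReal hp1)
  · refine le_trans (ENNReal.ofReal_le_ofReal hp2) ?_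
    have heq : Γ / (1 + Γ) = 1 - 1 / (1 + Γ) := by
      field_simp
      ring
    rw [heq, ENNReal.ofReal_sub _ (by positivity), ENNReal.ofReal_one]
    exact tsub_le_tsub_left hkey 1


lemma final {I : ℕ} {Ω Ω' : Type*} [MeasurableSpace Ω] [MeasurableSpace Ω']
    (μ : Measure Ω) (μ' : Measure Ω') [IsProbabilityMeasure μ] [IsProbabilityMeasure μ']
    (f : Fin I → Ω → Bool) (hfm : ∀ i, Measurable (f i))
    (hfi : iIndepFun f μ)
    (ξ : Fin I → Ω' → Bool) (hξm : ∀ i, Measurable (ξ i))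
    (hξi : iIndepFun ξ μ')
    (q : Fin I → Fin 2 → ℝ) (Γ0 : ℝ≥0∞) (K S : Finset (Fin I)) (hcard : K.card = S.card)
    (hK : ∀ i ∈ K, (1 + Γ0)⁻¹ ≤ μ {ω | f i ω = true}
      ∧ μ {ω | f i ω = true} ≤ 1 - (1 + Γ0)⁻¹)
    (hξS : ∀ i ∈ S, μ' {ω' | ξ i ω' = true} = 1 - (1 + Γ0)⁻¹)
    (hSsmall : ∀ i ∈ S, ∀ j ∉ S, |q i 0 - q i 1| ≤ |q j 0 - q j 1|)
    (α : ℝ) (hα0 : 0 ≤ α) :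
    μ {ω | (μ' {ω' | (∑ i, vF q i (f i ω)) ≤ ∑ i, vS q S i (ξ i ω')}).toReal ≤ α}
      ≤ ENNReal.ofReal α := by
  classical
  have hdom : ∀ t : ℝ, Ssum (wB μ f) (vF q) t ≤ Ssum (wB μ' ξ) (vS q S) t := by
    intro t
    exact dominance q Γ0 (fun i => μ {ω | f i ω = true}) (fun i => μ' {ω' | ξ i ω' = true})
      K S hcard (fun i => prob_le_one) (fun i => prob_le_one) hK hξS hSsmall t
  have hInner : ∀ t : ℝ, μ' {ω' | t ≤ ∑ i, vS q S i (ξ i ω')} = Ssum (wB μ' ξ) (vS q S) t :=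
    fun t => inner_eq μ' ξ hξm hξi (vS q S) t
  have hOuter : ∀ t : ℝ, μ {ω | t ≤ ∑ i, vF q i (f i ω)} = Ssum (wB μ f) (vF q) t :=
    fun t => inner_eq μ f hfm hfi (vF q) t
  set Vq : Finset ℝ := (Finset.univ.image (fun b : Fin I → Bool => ∑ i, vF q i (b i))).filter
    (fun x => Ssum (wB μ' ξ) (vS q S) x ≤ ENNReal.ofReal α) with hVq
  have hmemA : ∀ ω, (μ' {ω' | (∑ i, vF q i (f i ω)) ≤ ∑ i, vS q S i (ξ i ω')}).toReal ≤ α →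
      (∑ i, vF q i (f i ω)) ∈ Vq := by
    intro ω hω
    have h1 : μ' {ω' | (∑ i, vF q i (f i ω)) ≤ ∑ i, vS q S i (ξ i ω')} ≤ ENNReal.ofReal α :=
      (ENNReal.le_ofReal_iff_toReal_le (measure_ne_top μ' _) hα0).2 hω
    rw [hInner] at h1
    exact Finset.mem_filter.2 ⟨Finset.mem_image.2 ⟨fun i => f i ω, Finset.mem_univ _, rfl⟩, h1⟩
  by_cases hne : Vq.Nonempty
  · have hsub : {ω | (μ' {ω' | (∑ i, vF q i (f i ω)) ≤ ∑ i, vS q S i (ξ i ω')}).toReal ≤ α}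
        ⊆ {ω | Vq.min' hne ≤ ∑ i, vF q i (f i ω)} :=
      fun ω hω => Vq.min'_le _ (hmemA ω hω)
    calc μ {ω | (μ' {ω' | (∑ i, vF q i (f i ω)) ≤ ∑ i, vS q S i (ξ i ω')}).toReal ≤ α}
        ≤ μ {ω | Vq.min' hne ≤ ∑ i, vF q i (f i ω)} := measure_mono hsub
      _ = Ssum (wB μ f) (vF q) (Vq.min' hne) := hOuter _
      _ ≤ Ssum (wB μ' ξ) (vS q S) (Vq.min' hne) := hdom _
      _ ≤ ENNReal.ofReal α := (Finset.mem_filter.1 (Vq.min'_mem hne)).2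
  · have hempty : {ω | (μ' {ω' | (∑ i, vF q i (f i ω)) ≤ ∑ i, vS q S i (ξ i ω')}).toReal ≤ α}
        = (∅ : Set Ω) :=
      Set.eq_empty_iff_forall_notMem.2 fun ω hω => hne ⟨_, hmemA ω hω⟩
    rw [hempty, measure_empty]
    exact zero_le


end Stmt10Aux


open Stmt10Aux in
/-- Validity of the sensitivity-analysis p-value for quantiles of hidden biases
in matched pairs: under Fisher's sharp null and `Γ*_{(k)} ≤ Γ0`, the p-value
`p̄_{Γ0;k} = Ḡ_{Γ0;k}(T)` satisfies `P(p̄_{Γ0;k} ≤ α) ≤ α`. -/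
theorem stmt10
    {Ω Ω' : Type*} [MeasurableSpace Ω] [MeasurableSpace Ω']
    (μ : Measure Ω) (μ' : Measure Ω')
    [IsProbabilityMeasure μ] [IsProbabilityMeasure μ']
    (I : ℕ) (q : Fin I → Fin 2 → ℝ)
    (k : ℕ) (hk1 : 1 ≤ k) (hkI : k ≤ I)
    (Γ0 : ℝ≥0∞) (hΓ0 : 1 ≤ Γ0)
    (Γstar : Fin I → ℝ) (hΓstar : ∀ i, 1 ≤ Γstar i)
    (u : Fin I → Fin 2 → ℝ) (hu : ∀ i j, u i j ∈ Set.Icc (0:ℝ) 1)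
    (hquant : ∃ K : Finset (Fin I), K.card = k ∧ ∀ i ∈ K, ENNReal.ofReal (Γstar i) ≤ Γ0)
    (Z : Fin I → Ω → ℝ)
    (hZ01 : ∀ i ω, Z i ω = 0 ∨ Z i ω = 1)
    (hZmeas : ∀ i, Measurable (Z i))
    (hZind : iIndepFun Z μ)
    (hZp : ∀ i, μ {ω | Z i ω = 1}
      = ENNReal.ofReal (Real.exp (Real.log (Γstar i) * u i 0) /
          (Real.exp (Real.log (Γstar i) * u i 0) + Real.exp (Real.log (Γstar i) * u i 1))))
    (S : Finset (Fin I)) (hScard : S.card = k)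
    (hSsmall : ∀ i ∈ S, ∀ j ∉ S, |q i 0 - q i 1| ≤ |q j 0 - q j 1|)
    (ξ : Fin I → Ω' → Bool)
    (hξmeas : ∀ i, Measurable (ξ i))
    (hξind : iIndepFun ξ μ')
    (hξp : ∀ i ∈ S, μ' {ω | ξ i ω = true} = 1 - (1 + Γ0)⁻¹) :
    ∀ α ∈ Set.Ioo (0:ℝ) 1,
      μ {ω | (μ' {ω' | (∑ i, (Z i ω * q i 0 + (1 - Z i ω) * q i 1))
          ≤ (∑ i ∈ S, (if ξ i ω' then max (q i 0) (q i 1) else min (q i 0) (q i 1)))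
              + ∑ i ∈ Sᶜ, max (q i 0) (q i 1)}).toReal ≤ α}
        ≤ ENNReal.ofReal α := by
  intro α hα
  classical
  obtain ⟨K, hKcard, hKbound⟩ := hquant
  set f : Fin I → Ω → Bool := fun i => (fun x : ℝ => decide (x = 1)) ∘ Z i with hfdef
  have hdecm : Measurable (fun x : ℝ => decide (x = 1)) := by
    apply measurable_to_bool
    have : (fun x : ℝ => decide (x = 1)) ⁻¹' {true} = {(1 : ℝ)} := by
      ext x; simp
    rw [this]
    exact measurableSet_singleton 1
  have hfm : ∀ i, Measurable (f i) := fun i => hdecm.comp (hZmeas i)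
  have hfi : iIndepFun f μ :=
    hZind.comp (fun _ => fun x : ℝ => decide (x = 1)) (fun _ => hdecm)
  have hfset : ∀ i, {ω | f i ω = true} = {ω | Z i ω = 1} := by
    intro i; ext ω; simp [hfdef]
  have hK' : ∀ i ∈ K, (1 + Γ0)⁻¹ ≤ μ {ω | f i ω = true}
      ∧ μ {ω | f i ω = true} ≤ 1 - (1 + Γ0)⁻¹ := by
    intro i hi
    rw [hfset i, hZp i]
    exact prob_bound Γ0 (Γstar i) (hΓstar i) (hKbound i hi) (u i 0) (u i 1)
      (hu i 0).1 (hu i 0).2 (hu i 1).1 (hu i 1).2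
  have hT : ∀ ω, (∑ i, (Z i ω * q i 0 + (1 - Z i ω) * q i 1)) = ∑ i, vF q i (f i ω) := by
    intro ω
    refine Finset.sum_congr rfl fun i _ => ?_
    rcases hZ01 i ω with h | h
    · have hb : f i ω = false := by simp [hfdef, h]
      rw [h, hb]
      simp [vF]
    · have hb : f i ω = true := by simp [hfdef, h]
      rw [h, hb]
      simp [vF]
  have hE : ∀ ω' : Ω', ((∑ i ∈ S, (if ξ i ω' then max (q i 0) (q i 1) else min (q i 0) (q i 1)))
      + ∑ i ∈ Sᶜ, max (q i 0) (q i 1)) = ∑ i, vS q S i (ξ i ω') := by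
    intro ω'
    rw [← Finset.sum_add_sum_compl S (fun i => vS q S i (ξ i ω'))]
    congr 1
    · exact Finset.sum_congr rfl fun i hi => by simp [vS, hi]
    · exact Finset.sum_congr rfl fun i hi => by simp [vS, Finset.mem_compl.1 hi]
  have hsets : {ω | (μ' {ω' | (∑ i, (Z i ω * q i 0 + (1 - Z i ω) * q i 1))
          ≤ (∑ i ∈ S, (if ξ i ω' then max (q i 0) (q i 1) else min (q i 0) (q i 1)))
              + ∑ i ∈ Sᶜ, max (q i 0) (q i 1)}).toReal ≤ α}
      = {ω | (μ' {ω' | (∑ i, vF q i (f i ω)) ≤ ∑ i, vS q S i (ξ i ω')}).toReal ≤ α} := by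
    ext ω
    simp only [Set.mem_setOf_eq]
    have h3 : {ω' | (∑ i, (Z i ω * q i 0 + (1 - Z i ω) * q i 1))
          ≤ (∑ i ∈ S, (if ξ i ω' then max (q i 0) (q i 1) else min (q i 0) (q i 1)))
              + ∑ i ∈ Sᶜ, max (q i 0) (q i 1)}
        = {ω' | (∑ i, vF q i (f i ω)) ≤ ∑ i, vS q S i (ξ i ω')} := by
      ext ω'
      simp only [Set.mem_setOf_eq]
      rw [hT ω, hE ω']
    rw [h3]
  rw [hsets]
  exact final μ μ' f hfm hfi ξ hξmeas hξind q Γ0 K S (by rw [hKcard, hScard]) hK' hξp hSsmall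
    α hα.1.le
end

section
/- Let (p̄_{Γ_0;k})_{Γ_0 ≥ 1, 1 ≤ k ≤ I} be a family of valid p-values with the property: whenever the true hidden bias vector Γ* satisfies Γ*_{(k)} ≤ Γ_0, we have p̄_{Γ_0;k} ≥ G(T) where G is the true survival function of T evaluated at T. Define, for each Γ_0 and k, the set S_{Γ_0;k} = {Γ ∈ [1,∞]^I : Γ_{(k)} ≤ Γ_0}. Then the simultaneous confidence set ∩_{(Γ_0,k): p̄_{Γ_0;k} ≤ α} (S_{Γ_0;k})^c covers the true bias vector Γ* with probability at least 1 - α, for any α ∈ (0,1), with no multiplicity correction. -/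
open scoped ENNReal
open MeasureTheory

/-- Simultaneous validity of the confidence sets obtained by inverting a family
of valid sensitivity-analysis p-values: the intersection over all `(Γ0, k)`
with `p̄_{Γ0;k} ≤ α` of the complements of `S_{Γ0;k}` covers the true hidden
bias vector with probability at least `1 - α`, with no multiplicity
correction. -/
theorem stmt11
    {Ω : Type*} [MeasurableSpace Ω] (μ : Measure Ω) [IsProbabilityMeasure μ]
    (I : ℕ) (Γstar : Fin I → ℝ≥0∞)
    (T : Ω → ℝ) (hT : Measurable T)
    (p : ℝ≥0∞ → ℕ → Ω → ℝ)
    -- validity: whenever the true biases satisfy Γ*_{(k)} ≤ Γ0, the p-value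
    -- dominates the true survival function of T evaluated at T
    (hvalid : ∀ (Γ0 : ℝ≥0∞) (k : ℕ), 1 ≤ Γ0 → 1 ≤ k → k ≤ I →
      (∃ K : Finset (Fin I), K.card = k ∧ ∀ i ∈ K, Γstar i ≤ Γ0) →
      ∀ ω, (μ {ω' | T ω ≤ T ω'}).toReal ≤ p Γ0 k ω) :
    ∀ α ∈ Set.Ioo (0:ℝ) 1,
      ENNReal.ofReal (1 - α) ≤
        μ {ω | ∀ (Γ0 : ℝ≥0∞) (k : ℕ), 1 ≤ Γ0 → 1 ≤ k → k ≤ I →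
          p Γ0 k ω ≤ α →
          ¬ (∃ K : Finset (Fin I), K.card = k ∧ ∀ i ∈ K, Γstar i ≤ Γ0)} := by
  intro α hα
  set a := ENNReal.ofReal α with ha_def
  have ha1 : a < 1 := by
    rw [ha_def, ← ENNReal.ofReal_one]
    exact (ENNReal.ofReal_lt_ofReal_iff one_pos).mpr hα.2
  set B := {ω | μ {ω' | T ω ≤ T ω'} ≤ a} with hB_def
  have hS_anti : ∀ ⦃s t : ℝ⦄, s ≤ t →
      μ {ω' | t ≤ T ω'} ≤ μ {ω' | s ≤ T ω'} :=
    fun s t h => measure_mono (fun ω' ht => le_trans h ht)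
  -- key: countable monotone union bound
  have key : ∀ c : ℝ, (∀ t, c < t → μ {ω' | t ≤ T ω'} ≤ a) →
      μ {ω | c < T ω} ≤ a := by
    intro c hc
    have heq : {ω | c < T ω} = ⋃ n : ℕ, {ω | c + 1/(n+1) ≤ T ω} := by
      ext ω
      simp only [Set.mem_setOf_eq, Set.mem_iUnion]
      constructor
      · intro h
        obtain ⟨n, hn⟩ := exists_nat_one_div_lt (sub_pos.mpr h)
        exact ⟨n, by linarith⟩
      · rintro ⟨n, hn⟩
        have hpos : (0:ℝ) < 1/(n+1) := by positivity
        linarith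
    have hmono : Monotone (fun n : ℕ => {ω | c + 1/(n+1) ≤ T ω}) := by
      intro m n hmn ω hω
      simp only [Set.mem_setOf_eq] at hω ⊢
      have hmn' : (m:ℝ) ≤ n := Nat.cast_le.mpr hmn
      have h1 : (1:ℝ)/(n+1) ≤ 1/(m+1) := by
        apply one_div_le_one_div_of_le (by positivity)
        linarith
      linarith
    rw [heq, Directed.measure_iUnion hmono.directed_le]
    exact iSup_le fun n => hc _ (lt_add_of_pos_right c (by positivity))
  have hBa : μ B ≤ a := by
    by_cases hA : (∃ t : ℝ, μ {ω' | t ≤ T ω'} ≤ a)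
    · set A := {t : ℝ | μ {ω' | t ≤ T ω'} ≤ a} with hA_def
      by_cases hbd : BddBelow A
      · set c := sInf A with hc_def
        have hup : ∀ t, c < t → μ {ω' | t ≤ T ω'} ≤ a := by
          intro t ht
          obtain ⟨t', ht'A, ht'⟩ := exists_lt_of_csInf_lt hA ht
          exact le_trans (hS_anti ht'.le) ht'A
        by_cases hc : μ {ω' | c ≤ T ω'} ≤ a
        · have hsub : B ⊆ {ω | c ≤ T ω} := fun ω hω => csInf_le hbd hω
          exact le_trans (measure_mono hsub) hc
        · have hsub : B ⊆ {ω | c < T ω} := by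
            intro ω hω
            refine lt_of_le_of_ne (csInf_le hbd hω) fun h => hc ?_
            rw [show c = T ω from h]; exact hω
          exact le_trans (measure_mono hsub) (key c hup)
      · exfalso
        have hall : ∀ t : ℝ, μ {ω' | t ≤ T ω'} ≤ a := by
          intro t
          obtain ⟨t', ht'A, ht'⟩ := (not_bddBelow_iff.mp hbd) t
          exact le_trans (hS_anti ht'.le) ht'A
        have huniv : (Set.univ : Set Ω) = ⋃ n : ℕ, {ω | -(n:ℝ) ≤ T ω} := by
          ext ω
          simp only [Set.mem_univ, Set.mem_iUnion, Set.mem_setOf_eq, true_iff]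
          obtain ⟨n, hn⟩ := exists_nat_ge (-(T ω))
          exact ⟨n, by linarith⟩
        have hmono : Monotone (fun n : ℕ => {ω | -(n:ℝ) ≤ T ω}) := by
          intro m n hmn ω hω
          simp only [Set.mem_setOf_eq] at hω ⊢
          have : (m:ℝ) ≤ n := by exact_mod_cast hmn
          linarith
        have h1 : (1:ℝ≥0∞) ≤ a := by
          calc (1:ℝ≥0∞) = μ Set.univ := (measure_univ).symm
            _ = ⨆ n : ℕ, μ {ω | -(n:ℝ) ≤ T ω} := by
                rw [huniv, Directed.measure_iUnion hmono.directed_le]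
            _ ≤ a := iSup_le fun n => hall _
        exact absurd h1 (not_le.mpr ha1)
    · have hsub : B ⊆ (∅ : Set Ω) := fun ω hω => hA ⟨T ω, hω⟩
      simpa using le_trans (measure_mono hsub) (by simp : μ (∅ : Set Ω) ≤ a)
  -- complement of B is contained in the good event
  set G := {ω | ∀ (Γ0 : ℝ≥0∞) (k : ℕ), 1 ≤ Γ0 → 1 ≤ k → k ≤ I →
      p Γ0 k ω ≤ α →
      ¬ (∃ K : Finset (Fin I), K.card = k ∧ ∀ i ∈ K, Γstar i ≤ Γ0)} with hG_def
  have hsub : Bᶜ ⊆ G := by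
    intro ω hω Γ0 k h1 hk1 hkI hpα hK
    have hle : (μ {ω' | T ω ≤ T ω'}).toReal ≤ α :=
      le_trans (hvalid Γ0 k h1 hk1 hkI hK ω) hpα
    have : μ {ω' | T ω ≤ T ω'} ≤ a := by
      rw [← ENNReal.ofReal_toReal (measure_ne_top μ _)]
      exact ENNReal.ofReal_le_ofReal hle
    exact hω this
  have hcover : (1:ℝ≥0∞) ≤ μ G + a := by
    have huniv : (Set.univ : Set Ω) ⊆ G ∪ B := by
      intro ω _
      by_cases h : ω ∈ B
      · exact Or.inr h
      · exact Or.inl (hsub h)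
    calc (1:ℝ≥0∞) = μ Set.univ := (measure_univ).symm
      _ ≤ μ (G ∪ B) := measure_mono huniv
      _ ≤ μ G + μ B := measure_union_le G B
      _ ≤ μ G + a := add_le_add_right hBa _
  have : ENNReal.ofReal (1 - α) = 1 - a := by
    rw [ha_def, ENNReal.ofReal_sub 1 hα.1.le, ENNReal.ofReal_one]
  rw [this]
  exact tsub_le_iff_right.mpr hcover
end

section
/- Consider a matched set with one treated unit among n units, with treatment probabilities e_{(j)} = P(Z_{(j)} = 1) for the units sorted by their scores q_{(1)} ≤ ... ≤ q_{(n)}, Σ_j e_{(j)} = 1. Let T_s = Σ_j Z_{(j)} q_{(j)} with mean μ = Σ_j e_{(j)} q_{(j)} and variance v² = Σ_j e_{(j)}(q_{(j)} - μ)², and let R = q_{(n)} - q_{(1)}. Then μ - q_{(1)} ≥ e_{(n)} R and q_{(n)} - μ ≥ e_{(1)} R, and consequently v² ≥ e_{(1)} e_{(n)} (e_{(1)} + e_{(n)}) R². -/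
/-- Lower bounds on the mean deviations and the variance of a one-hot weighted
statistic in terms of the extreme assignment probabilities and the range. -/
theorem stmt12
    (n : ℕ) (hn : 0 < n) (e q : Fin n → ℝ)
    (he0 : ∀ j, 0 ≤ e j) (hesum : ∑ j, e j = 1) (hq : Monotone q) :
    let first : Fin n := ⟨0, hn⟩
    let last : Fin n := ⟨n - 1, Nat.sub_lt hn Nat.one_pos⟩
    let m : ℝ := ∑ j, e j * q j
    let v2 : ℝ := ∑ j, e j * (q j - m) ^ 2
    let R : ℝ := q last - q first
    e last * R ≤ m - q first ∧
      e first * R ≤ q last - m ∧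
      e first * e last * (e first + e last) * R ^ 2 ≤ v2 := by
  intro first last m v2 R
  have hfirst_le : ∀ j : Fin n, first ≤ j := fun j => Fin.mk_le_mk.mpr (Nat.zero_le _)
  have hlast_ge : ∀ j : Fin n, j ≤ last := fun j =>
    Fin.mk_le_mk.mpr (Nat.le_sub_one_of_lt j.isLt)
  have hqf : ∀ j, q first ≤ q j := fun j => hq (hfirst_le j)
  have hql : ∀ j, q j ≤ q last := fun j => hq (hlast_ge j)
  have hR0 : 0 ≤ R := sub_nonneg.mpr (hqf last)
  -- first claim
  have h1 : e last * R ≤ m - q first := by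
    have hm : m - q first = ∑ j, e j * (q j - q first) := by
      simp only [m, mul_sub, Finset.sum_sub_distrib, ← Finset.sum_mul, hesum, one_mul]
    rw [hm]
    exact Finset.single_le_sum (f := fun j => e j * (q j - q first))
      (fun j _ => mul_nonneg (he0 j) (sub_nonneg.mpr (hqf j))) (Finset.mem_univ last)
  have h2 : e first * R ≤ q last - m := by
    have hm : q last - m = ∑ j, e j * (q last - q j) := by
      simp only [m, mul_sub, Finset.sum_sub_distrib, ← Finset.sum_mul, hesum, one_mul]
    rw [hm]
    exact Finset.single_le_sum (f := fun j => e j * (q last - q j))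
      (fun j _ => mul_nonneg (he0 j) (sub_nonneg.mpr (hql j))) (Finset.mem_univ first)
  refine ⟨h1, h2, ?_⟩
  have hv2nn : ∀ j ∈ Finset.univ, (0:ℝ) ≤ e j * (q j - m) ^ 2 :=
    fun j _ => mul_nonneg (he0 j) (sq_nonneg _)
  by_cases hfl : first = last
  · have hRz : R = 0 := by simp [R, hfl]
    have : (0:ℝ) ≤ v2 := Finset.sum_nonneg hv2nn
    simpa [hRz] using this
  · -- two-term lower bound
    have hsub : ({first, last} : Finset (Fin n)) ⊆ Finset.univ := Finset.subset_univ _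
    have hkey : e first * (q first - m) ^ 2 + e last * (q last - m) ^ 2 ≤ v2 := by
      have := Finset.sum_le_sum_of_subset_of_nonneg hsub
        (fun j _ _ => mul_nonneg (he0 j) (sq_nonneg _))
        (f := fun j => e j * (q j - m) ^ 2)
      simpa [Finset.sum_pair hfl] using this
    have hb1 : (e last * R) ^ 2 ≤ (q first - m) ^ 2 := by
      have h : e last * R ≤ m - q first := h1
      have hnn : 0 ≤ e last * R := mul_nonneg (he0 last) hR0
      calc (e last * R) ^ 2 ≤ (m - q first) ^ 2 := pow_le_pow_left₀ hnn h 2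
        _ = (q first - m) ^ 2 := by ring
    have hb2 : (e first * R) ^ 2 ≤ (q last - m) ^ 2 := by
      have hnn : 0 ≤ e first * R := mul_nonneg (he0 first) hR0
      exact pow_le_pow_left₀ hnn h2 2
    calc e first * e last * (e first + e last) * R ^ 2
        = e first * (e last * R) ^ 2 + e last * (e first * R) ^ 2 := by ring
      _ ≤ e first * (q first - m) ^ 2 + e last * (q last - m) ^ 2 :=
          add_le_add (mul_le_mul_of_nonneg_left hb1 (he0 first))
            (mul_le_mul_of_nonneg_left hb2 (he0 last))
      _ ≤ v2 := hkey
end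

section
/- Let μ_i, v_i² be the true means and variances of independent statistics T_i (i=1,...,I), and let μ_i(Γ_i), v_i²(Γ_i) be their maximized counterparts under the constraint that the hidden bias of set i is at most Γ_i, satisfying μ_i ≤ μ_i(Γ_i) for all i. Let A = {i : v_i² > v_i²(Γ_i)}, and set Δ_μ = |A|^{-1} Σ_{i∈A} (μ_i(Γ_i) - μ_i) > 0 and Δ_{v²} = |A|^{-1} Σ_{i∈A} (v_i² - v_i²(Γ_i)) > 0 (when A is nonempty). Write μ(Γ) = Σ_i μ_i(Γ_i), σ²(Γ) = Σ_i v_i²(Γ_i), μ = Σ_i μ_i, σ² = Σ_i v_i². Then for any c ≥ 0: μ(Γ) + c·σ(Γ) − (μ + c·σ) ≥ (|A|·Δ_{v²}/σ) · (Δ_μ·σ/Δ_{v²} − c). In particular, if Δ_μ·σ/Δ_{v²} ≥ c, then μ(Γ) + c·σ(Γ) ≥ μ + c·σ. -/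
/-- Key deterministic inequality: the worst-case Gaussian quantile
`μ(Γ) + c σ(Γ)` dominates the true one `μ + c σ` once the mean gain dominates
the variance loss. Here `v i` and `vG i` denote the true and maximized
variances `v_i²` and `v_i²(Γ_i)`. -/
theorem stmt15
    (I : ℕ) (m mG v vG : Fin I → ℝ) (c : ℝ) (hc : 0 ≤ c)
    (hm : ∀ i, m i ≤ mG i)
    (hv0 : ∀ i, 0 ≤ v i) (hvG0 : ∀ i, 0 ≤ vG i)
    (hσpos : 0 < ∑ i, v i)
    (hA : (Finset.univ.filter (fun i => vG i < v i)).Nonempty) :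
    let A := Finset.univ.filter (fun i => vG i < v i)
    let Δμ : ℝ := (A.card : ℝ)⁻¹ * ∑ i ∈ A, (mG i - m i)
    let Δv : ℝ := (A.card : ℝ)⁻¹ * ∑ i ∈ A, (v i - vG i)
    let σ : ℝ := Real.sqrt (∑ i, v i)
    let σG : ℝ := Real.sqrt (∑ i, vG i)
    ((A.card : ℝ) * Δv / σ * (Δμ * σ / Δv - c)
        ≤ (∑ i, mG i) + c * σG - ((∑ i, m i) + c * σ)) ∧
      (c ≤ Δμ * σ / Δv → (∑ i, m i) + c * σ ≤ (∑ i, mG i) + c * σG) := by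
  intro A Δμ Δv σ σG
  have hcard : 0 < A.card := Finset.card_pos.mpr hA
  have hcardR : (0:ℝ) < (A.card : ℝ) := by exact_mod_cast hcard
  have hKpos : 0 < ∑ i ∈ A, (v i - vG i) := by
    refine Finset.sum_pos (fun i hi => ?_) hA
    have := (Finset.mem_filter.mp hi).2
    linarith
  have hΔv : 0 < Δv := mul_pos (inv_pos.mpr hcardR) hKpos
  have hσ : 0 < σ := Real.sqrt_pos.mpr hσpos
  have hΔμ0 : 0 ≤ Δμ := by
    refine mul_nonneg (inv_nonneg.mpr hcardR.le) (Finset.sum_nonneg fun i _ => ?_)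
    linarith [hm i]
  have hcardΔv : (A.card : ℝ) * Δv = ∑ i ∈ A, (v i - vG i) := by
    show (A.card : ℝ) * ((A.card : ℝ)⁻¹ * ∑ i ∈ A, (v i - vG i)) = _
    rw [← mul_assoc, mul_inv_cancel₀ hcardR.ne', one_mul]
  have hcardΔμ : (A.card : ℝ) * Δμ = ∑ i ∈ A, (mG i - m i) := by
    show (A.card : ℝ) * ((A.card : ℝ)⁻¹ * ∑ i ∈ A, (mG i - m i)) = _
    rw [← mul_assoc, mul_inv_cancel₀ hcardR.ne', one_mul]
  have hmean : (A.card : ℝ) * Δμ ≤ (∑ i, mG i) - (∑ i, m i) := by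
    rw [hcardΔμ]
    have h1 : ∑ i ∈ A, (mG i - m i) ≤ ∑ i, (mG i - m i) := by
      refine Finset.sum_le_sum_of_subset_of_nonneg (Finset.filter_subset _ _)
        (fun i _ _ => ?_)
      linarith [hm i]
    simpa [Finset.sum_sub_distrib] using h1
  have hsd : σ - σG ≤ (∑ i ∈ A, (v i - vG i)) / σ := by
    rcases le_or_gt (∑ i, v i) (∑ i, vG i) with h | h
    · have h1 : σ ≤ σG := Real.sqrt_le_sqrt h
      have h2 : (0:ℝ) ≤ (∑ i ∈ A, (v i - vG i)) / σ := by positivity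
      linarith
    · have hσGle : σG ≤ σ := Real.sqrt_le_sqrt h.le
      have hσG0 : (0:ℝ) ≤ σG := Real.sqrt_nonneg _
      have hS : σ ^ 2 = ∑ i, v i := Real.sq_sqrt hσpos.le
      have hSG : σG ^ 2 = ∑ i, vG i := Real.sq_sqrt (Finset.sum_nonneg fun i _ => hvG0 i)
      have hSK : (∑ i, v i) - (∑ i, vG i) ≤ ∑ i ∈ A, (v i - vG i) := by
        have hsplit := Finset.sum_filter_add_sum_filter_not Finset.univ
          (fun i => vG i < v i) (fun i => v i - vG i)
        have hneg : ∑ i ∈ Finset.univ.filter (fun i => ¬ vG i < v i), (v i - vG i) ≤ 0 := by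
          refine Finset.sum_nonpos fun i hi => ?_
          have := (Finset.mem_filter.mp hi).2
          linarith [not_lt.mp this]
        have hall : ∑ i, (v i - vG i) = (∑ i, v i) - (∑ i, vG i) :=
          Finset.sum_sub_distrib _ _
        rw [hall] at hsplit
        linarith [hsplit]
      rw [le_div_iff₀ hσ]
      nlinarith
  have key : (A.card : ℝ) * Δv / σ * (Δμ * σ / Δv - c)
      = (A.card : ℝ) * Δμ - c * ((∑ i ∈ A, (v i - vG i)) / σ) := by
    rw [← hcardΔv]
    field_simp
  have hcσ : c * (σ - σG) ≤ c * ((∑ i ∈ A, (v i - vG i)) / σ) :=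
    mul_le_mul_of_nonneg_left hsd hc
  constructor
  · rw [key]; nlinarith
  · intro hcle
    have h0 : 0 ≤ (A.card : ℝ) * Δv / σ * (Δμ * σ / Δv - c) := by
      have : 0 ≤ (A.card : ℝ) * Δv / σ := by positivity
      exact mul_nonneg this (by linarith)
    rw [key] at h0
    nlinarith
end

section
/- Let t(z, y) be an effect increasing test statistic: t(z, y + z∘η + (1−z)∘ξ) ≥ t(z, y) for all z ∈ Z, y ∈ ℝ^N and η ⪰ 0 ⪰ ξ. Assume every unit's treatment potential outcome is at most its control potential outcome, Y(1) ⪯ Y(0) (the bounded null), and let Y = Z∘Y(1) + (1−Z)∘Y(0) be the observed outcome vector. Then for every assignment a ∈ Z: t(a, Y) ≥ t(a, Y(a)), where Y(a) = a∘Y(1) + (1−a)∘Y(0). -/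
/-- For an effect increasing statistic, under the bounded null `Y(1) ⪯ Y(0)`,
the statistic computed on the observed outcomes `Y` dominates the statistic
computed on the outcomes `Y(a)` that would be observed under assignment `a`. -/
theorem stmt18
    (N : ℕ) (𝒵 : Set (Fin N → ℝ))
    (h𝒵 : ∀ z ∈ 𝒵, ∀ i, z i = 0 ∨ z i = 1)
    (t : (Fin N → ℝ) → (Fin N → ℝ) → ℝ)
    (hEI : ∀ z ∈ 𝒵, ∀ y η ξ : Fin N → ℝ,
      (∀ i, 0 ≤ η i) → (∀ i, ξ i ≤ 0) →
      t z y ≤ t z (fun i => y i + z i * η i + (1 - z i) * ξ i))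
    (Y1 Y0 : Fin N → ℝ) (hnull : ∀ i, Y1 i ≤ Y0 i)
    (Z : Fin N → ℝ) (hZ : Z ∈ 𝒵) :
    ∀ a ∈ 𝒵,
      t a (fun i => a i * Y1 i + (1 - a i) * Y0 i)
        ≤ t a (fun i => Z i * Y1 i + (1 - Z i) * Y0 i) := by
  intro a ha
  have h := hEI a ha (fun i => a i * Y1 i + (1 - a i) * Y0 i)
      (fun i => (1 - Z i) * (Y0 i - Y1 i)) (fun i => Z i * (Y1 i - Y0 i))
      (fun i => by rcases h𝒵 Z hZ i with h | h <;> simp [h, sub_nonneg, hnull i])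
      (fun i => by rcases h𝒵 Z hZ i with h | h <;> simp [h, sub_nonpos, hnull i])
  convert h using 2
  funext i
  rcases h𝒵 a ha i with h1 | h1 <;> rcases h𝒵 Z hZ i with h2 | h2 <;>
    simp [h1, h2] <;> ring
end

section
/- Let t(z, y) be a differential increasing test statistic: t(z, y + a∘η) − t(z, y) ≤ t(a, y + a∘η) − t(a, y) for all z, a ∈ Z, y ∈ ℝ^N and η ⪰ 0. Assume the bounded null Y(1) ⪯ Y(0) holds and let Y = Z∘Y(1) + (1−Z)∘Y(0) be the observed outcome vector under the realized assignment Z. Then for every a ∈ Z: t(a, Y) − t(Z, Y) ≥ t(a, Y(0)) − t(Z, Y(0)). Consequently, 1{t(a, Y) ≥ t(Z, Y)} ≥ 1{t(a, Y(0)) ≥ t(Z, Y(0))} for every a, so any assignment-randomization tail probability of t(·, Y) evaluated at t(Z, Y) is at least the corresponding tail probability of t(·, Y(0)) evaluated at t(Z, Y(0)). -/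
/-- For a differential increasing statistic, under the bounded null
`Y(1) ⪯ Y(0)`, the differential `t(a, Y) - t(Z, Y)` dominates
`t(a, Y(0)) - t(Z, Y(0))`; consequently the corresponding indicator
comparison holds and any assignment-randomization tail probability computed
from the observed outcomes dominates the one computed from `Y(0)`. -/
theorem stmt19
    (N : ℕ) (𝒵 : Set (Fin N → ℝ))
    (h𝒵 : ∀ z ∈ 𝒵, ∀ i, z i = 0 ∨ z i = 1)
    (t : (Fin N → ℝ) → (Fin N → ℝ) → ℝ)
    (hDI : ∀ z ∈ 𝒵, ∀ a ∈ 𝒵, ∀ y η : Fin N → ℝ, (∀ i, 0 ≤ η i) →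
      t z (fun i => y i + a i * η i) - t z y
        ≤ t a (fun i => y i + a i * η i) - t a y)
    (Y1 Y0 : Fin N → ℝ) (hnull : ∀ i, Y1 i ≤ Y0 i)
    (Z : Fin N → ℝ) (hZ : Z ∈ 𝒵) :
    let Y : Fin N → ℝ := fun i => Z i * Y1 i + (1 - Z i) * Y0 i
    (∀ a ∈ 𝒵, t a Y0 - t Z Y0 ≤ t a Y - t Z Y) ∧
      (∀ a ∈ 𝒵, t Z Y0 ≤ t a Y0 → t Z Y ≤ t a Y) ∧
      (∀ (ι : Type) (A : Finset ι) (w : ι → ℝ) (az : ι → Fin N → ℝ),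
        (∀ j ∈ A, 0 ≤ w j) → (∀ j ∈ A, az j ∈ 𝒵) →
        (∑ j ∈ A, w j * (if t Z Y0 ≤ t (az j) Y0 then (1:ℝ) else 0))
          ≤ ∑ j ∈ A, w j * (if t Z Y ≤ t (az j) Y then (1:ℝ) else 0)) := by
  intro Y
  have key : ∀ a ∈ 𝒵, t a Y0 - t Z Y0 ≤ t a Y - t Z Y := by
    intro a ha
    have hη : ∀ i, 0 ≤ Y0 i - Y1 i := fun i => by linarith [hnull i]
    have h := hDI a ha Z hZ Y (fun i => Y0 i - Y1 i) hη
    have hy0 : (fun i => Y i + Z i * (Y0 i - Y1 i)) = Y0 := by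
      funext i; simp only [Y]; ring
    rw [hy0] at h
    linarith
  refine ⟨key, fun a ha h => by linarith [key a ha], ?_⟩
  intro ι A w az hw haz
  apply Finset.sum_le_sum
  intro j hj
  apply mul_le_mul_of_nonneg_left _ (hw j hj)
  by_cases h : t Z Y0 ≤ t (az j) Y0
  · have := key (az j) (haz j hj)
    simp [h, show t Z Y ≤ t (az j) Y by linarith]
  · simp [h]; positivity
end
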